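/- arXiv:0810.4062 — 7 statements merged into one kernel-verified Lean document; each statement's English description precedes it below -/
import Mathlib

section
/- If H1 and H2 are finite k-uniform hypergraphs such that hom(F,H1) = hom(F,H2) for every finite k-uniform hypergraph F, then H1 and H2 are isomorphic. -/
open Finset

/-- A `k`-uniform hypergraph on a finite vertex set `V`: an `S_k`-invariant set of
`k`-tuples of vertices with no repeated coordinates. -/
structure HyperGraph (k : ℕ) (V : Type) [DecidableEq V] [Fintype V] where
  edges : Finset (Fin k → V)
  perm_mem : ∀ σ : Equiv.Perm (Fin k), ∀ e ∈ edges, e ∘ σ ∈ edges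
  edge_inj : ∀ e ∈ edges, Function.Injective e

variable {k : ℕ} {V W : Type} [DecidableEq V] [Fintype V] [DecidableEq W] [Fintype W]

/-- `f : V(F) → V(H)` is a homomorphism if it maps edges to edges. -/
def IsHom (F : HyperGraph k V) (H : HyperGraph k W) (f : V → W) : Prop :=
  ∀ e ∈ F.edges, f ∘ e ∈ H.edges

/-- `hom(F,H)`: the number of homomorphisms from `F` to `H`. -/
noncomputable def homCount (F : HyperGraph k V) (H : HyperGraph k W) : ℕ :=
  letI := Classical.decPred (IsHom F H)
  (Finset.univ.filter (IsHom F H)).card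

/-- `hom⁰(F,H)`: the number of injective homomorphisms from `F` to `H`. -/
noncomputable def injHomCount (F : HyperGraph k V) (H : HyperGraph k W) : ℕ :=
  letI : DecidablePred (fun f : V → W => IsHom F H f ∧ Function.Injective f) :=
    Classical.decPred _
  (Finset.univ.filter (fun f : V → W => IsHom F H f ∧ Function.Injective f)).card

noncomputable instance : Fintype (Finpartition (Finset.univ : Finset V)) :=
  Fintype.ofInjective Finpartition.parts (fun P Q h => by cases P; cases Q; congr)

/-- The quotient hypergraph `F(𝒫)` is `k`-uniform iff every partition class meets every
edge in at most one vertex, i.e. the quotient map is injective on every edge. -/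
def QuotUniform (F : HyperGraph k V) (P : Finpartition (Finset.univ : Finset V)) : Prop :=
  ∀ e ∈ F.edges, Function.Injective (fun j => P.part (e j))

/-- The quotient hypergraph `F(𝒫)` on the classes of the partition `𝒫`, defined when it is
`k`-uniform: its edges are the images of the edges of `F` under the quotient map. -/
def quotHG (F : HyperGraph k V) (P : Finpartition (Finset.univ : Finset V))
    (h : QuotUniform F P) : HyperGraph k {s // s ∈ P.parts} where
  edges := F.edges.image
    (fun e j => (⟨P.part (e j), P.part_mem.2 (Finset.mem_univ _)⟩ : {s // s ∈ P.parts}))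
  perm_mem := by
    intro σ q hq
    simp only [Finset.mem_image] at hq ⊢
    obtain ⟨e, he, rfl⟩ := hq
    exact ⟨e ∘ σ, F.perm_mem σ e he, rfl⟩
  edge_inj := by
    intro q hq
    simp only [Finset.mem_image] at hq
    obtain ⟨e, he, rfl⟩ := hq
    intro a b hab
    exact h e he (by simpa using congrArg Subtype.val hab)

section Aux

variable {V' : Type} [DecidableEq V'] [Fintype V']

/-- Reindex a hypergraph along an equivalence of vertex types. -/
def HyperGraph.reindex (F : HyperGraph k V) (φ : V ≃ V') : HyperGraph k V' where
  edges := F.edges.image (fun e => ⇑φ ∘ e)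
  perm_mem := by
    intro σ q hq
    simp only [Finset.mem_image] at hq ⊢
    obtain ⟨e, he, rfl⟩ := hq
    exact ⟨e ∘ σ, F.perm_mem σ e he, rfl⟩
  edge_inj := by
    intro q hq
    simp only [Finset.mem_image] at hq
    obtain ⟨e, he, rfl⟩ := hq
    exact φ.injective.comp (F.edge_inj e he)

lemma HyperGraph.mem_reindex (F : HyperGraph k V) (φ : V ≃ V') (e : Fin k → V) :
    e ∈ F.edges ↔ ⇑φ ∘ e ∈ (F.reindex φ).edges := by
  simp only [reindex, Finset.mem_image]
  constructor
  · exact fun he => ⟨e, he, rfl⟩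
  · rintro ⟨e', he', h'⟩
    have he : e' = e := funext fun j => φ.injective (congrFun h' j)
    rwa [← he]

/-- Transporting hom/injhom counts along an equivalence of source vertex types. -/
lemma homCount_congr (φ : V ≃ V') (F : HyperGraph k V) (F' : HyperGraph k V')
    (hedge : ∀ e : Fin k → V, e ∈ F.edges ↔ ⇑φ ∘ e ∈ F'.edges) (H : HyperGraph k W) :
    homCount F H = homCount F' H := by
  classical
  have key : ∀ g : V' → W, IsHom F' H g ↔ IsHom F H (g ∘ ⇑φ) := by
    intro g
    constructor
    · intro hg e he
      have := hg (⇑φ ∘ e) ((hedge e).1 he)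
      simpa [Function.comp_assoc] using this
    · intro hg q hq
      have hm : ⇑φ.symm ∘ q ∈ F.edges := by
        rw [hedge]
        have : ⇑φ ∘ (⇑φ.symm ∘ q) = q := funext fun j => by simp
        rwa [this]
      have := hg _ hm
      have h2 : (g ∘ ⇑φ) ∘ (⇑φ.symm ∘ q) = g ∘ q := funext fun j => by simp
      rwa [h2] at this
  unfold homCount
  apply Finset.card_bij' (fun f _ => f ∘ ⇑φ.symm) (fun g _ => g ∘ ⇑φ)
  · intro f hf
    simp only [Finset.mem_filter, Finset.mem_univ, true_and] at hf ⊢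
    rw [key]
    have : (f ∘ ⇑φ.symm) ∘ ⇑φ = f := funext fun a => by simp
    rwa [this]
  · intro g hg
    simp only [Finset.mem_filter, Finset.mem_univ, true_and] at hg ⊢
    exact (key g).1 hg
  · intro f _; funext a; simp
  · intro g _; funext a; simp

lemma injHomCount_congr (φ : V ≃ V') (F : HyperGraph k V) (F' : HyperGraph k V')
    (hedge : ∀ e : Fin k → V, e ∈ F.edges ↔ ⇑φ ∘ e ∈ F'.edges) (H : HyperGraph k W) :
    injHomCount F H = injHomCount F' H := by
  classical
  have key : ∀ g : V' → W, IsHom F' H g ↔ IsHom F H (g ∘ ⇑φ) := by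
    intro g
    constructor
    · intro hg e he
      have := hg (⇑φ ∘ e) ((hedge e).1 he)
      simpa [Function.comp_assoc] using this
    · intro hg q hq
      have hm : ⇑φ.symm ∘ q ∈ F.edges := by
        rw [hedge]
        have : ⇑φ ∘ (⇑φ.symm ∘ q) = q := funext fun j => by simp
        rwa [this]
      have := hg _ hm
      have h2 : (g ∘ ⇑φ) ∘ (⇑φ.symm ∘ q) = g ∘ q := funext fun j => by simp
      rwa [h2] at this
  unfold injHomCount
  apply Finset.card_bij' (fun f _ => f ∘ ⇑φ.symm) (fun g _ => g ∘ ⇑φ)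
  · intro f hf
    simp only [Finset.mem_filter, Finset.mem_univ, true_and] at hf ⊢
    constructor
    · rw [key]
      have : (f ∘ ⇑φ.symm) ∘ ⇑φ = f := funext fun a => by simp
      rw [this]; exact hf.1
    · exact hf.2.comp φ.symm.injective
  · intro g hg
    simp only [Finset.mem_filter, Finset.mem_univ, true_and] at hg ⊢
    exact ⟨(key g).1 hg.1, hg.2.comp φ.injective⟩
  · intro f _; funext a; simp
  · intro g _; funext a; simp

end Aux

section Main
open scoped Classical

/-- `hom(F,H)` decomposes as a sum over quotient-uniform partitions of inj hom counts. -/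
lemma homCount_eq_sum (F : HyperGraph k V) (H : HyperGraph k W) :
    homCount F H = ∑ P : Finpartition (Finset.univ : Finset V),
      if h : QuotUniform F P then injHomCount (quotHG F P h) H else 0 := by
  classical
  set partOf : (V → W) → Finpartition (Finset.univ : Finset V) :=
    fun f => Finpartition.ofSetoid (Setoid.ker f) with hpartOf
  have mem_part_iff : ∀ (f : V → W) (a b : V), b ∈ (partOf f).part a ↔ f a = f b := by
    intro f a b
    rw [hpartOf]
    exact Finpartition.mem_part_ofSetoid_iff_rel
  have step1 : homCount F H = ∑ P ∈ (Finset.univ : Finset (Finpartition (Finset.univ : Finset V))),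
      ((Finset.univ.filter (IsHom F H)).filter (fun f => partOf f = P)).card := by
    unfold homCount
    rw [Finset.card_eq_sum_card_fiberwise (f := partOf)
      (t := Finset.univ) (fun f _ => Finset.mem_univ _)]
  rw [step1]
  apply Finset.sum_congr rfl
  intro P _
  by_cases h : QuotUniform F P
  · rw [dif_pos h]
    -- representatives
    set rep : {s // s ∈ P.parts} → V := fun s => (P.nonempty_of_mem_parts s.2).choose with hrep
    have rep_mem : ∀ s : {s // s ∈ P.parts}, rep s ∈ (s : Finset V) :=
      fun s => (P.nonempty_of_mem_parts s.2).choose_spec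
    have part_rep : ∀ s : {s // s ∈ P.parts}, P.part (rep s) = (s : Finset V) :=
      fun s => P.part_eq_of_mem s.2 (rep_mem s)
    have K : ∀ (f : V → W), partOf f = P → ∀ a : V,
        f (rep ⟨P.part a, P.part_mem.2 (Finset.mem_univ a)⟩) = f a := by
      intro f hfP a
      have h1 : rep ⟨P.part a, P.part_mem.2 (Finset.mem_univ a)⟩ ∈ P.part a :=
        rep_mem ⟨P.part a, P.part_mem.2 (Finset.mem_univ a)⟩
      revert h1
      generalize rep ⟨P.part a, P.part_mem.2 (Finset.mem_univ a)⟩ = x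
      intro h1
      have h2 : x ∈ (partOf f).part a := by rw [hfP]; exact h1
      exact ((mem_part_iff f a x).1 h2).symm
    unfold injHomCount
    apply Finset.card_bij' (i := fun f _ => (fun s => f (rep s)))
      (j := fun g _ => (fun a => g ⟨P.part a, P.part_mem.2 (Finset.mem_univ a)⟩))
      ?hi ?hj ?li ?ri
    case hi =>
      intro f hf
      simp only [Finset.mem_filter, Finset.mem_univ, true_and] at hf ⊢
      obtain ⟨hfhom, hfP⟩ := hf
      constructor
      · intro q hq
        simp only [quotHG, Finset.mem_image] at hq
        obtain ⟨e, he, rfl⟩ := hq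
        have hcomp : ((fun s => f (rep s)) ∘ fun j =>
            (⟨P.part (e j), P.part_mem.2 (Finset.mem_univ _)⟩ : {s // s ∈ P.parts}))
            = f ∘ e := by
          funext j
          exact K f hfP (e j)
        rw [hcomp]
        exact hfhom e he
      · intro s t hst
        have h1 : rep t ∈ (partOf f).part (rep s) := by
          rw [mem_part_iff]
          exact hst
        rw [hfP] at h1
        have h2 : P.part (rep s) = (t : Finset V) :=
          P.eq_of_mem_parts (P.part_mem.2 (Finset.mem_univ _)) t.2 h1 (rep_mem t)
        rw [part_rep s] at h2
        exact Subtype.ext h2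
    case hj =>
      intro g hg
      simp only [Finset.mem_filter, Finset.mem_univ, true_and] at hg ⊢
      obtain ⟨hghom, hginj⟩ := hg
      constructor
      · intro e he
        have hq : (fun j => (⟨P.part (e j), P.part_mem.2 (Finset.mem_univ _)⟩ :
            {s // s ∈ P.parts})) ∈ (quotHG F P h).edges := by
          simp only [quotHG, Finset.mem_image]
          exact ⟨e, he, rfl⟩
        exact hghom _ hq
      · have part_eq : ∀ a : V,
            (partOf fun a => g ⟨P.part a, P.part_mem.2 (Finset.mem_univ a)⟩).part a
              = P.part a := by
          intro a
          ext b
          rw [mem_part_iff]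
          constructor
          · intro hab
            have heq : (⟨P.part a, P.part_mem.2 (Finset.mem_univ a)⟩ : {s // s ∈ P.parts})
                = ⟨P.part b, P.part_mem.2 (Finset.mem_univ b)⟩ := hginj hab
            have hPab : P.part a = P.part b := congrArg Subtype.val heq
            rw [hPab]
            exact P.mem_part (Finset.mem_univ b)
          · intro hb
            have hba : P.part b = P.part a :=
              (P.mem_part_iff_part_eq_part (Finset.mem_univ b) (Finset.mem_univ a)).1 hb
            exact congrArg g (Subtype.ext hba.symm)
        apply Finpartition.ext
        apply Finset.Subset.antisymm
        · intro t ht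
          obtain ⟨a, _, ha⟩ := Finpartition.part_surjOn _ ht
          rw [← ha, part_eq a]
          exact P.part_mem.2 (Finset.mem_univ a)
        · intro t ht
          obtain ⟨a, _, ha⟩ := Finpartition.part_surjOn _ ht
          rw [← ha, ← part_eq a]
          exact (Finpartition.part_mem _).2 (Finset.mem_univ a)
    case li =>
      intro f hf
      simp only [Finset.mem_filter, Finset.mem_univ, true_and] at hf
      funext a
      exact K f hf.2 a
    case ri =>
      intro g _
      funext s
      exact congrArg g (Subtype.ext (part_rep s))
  · rw [dif_neg h]
    rw [Finset.card_eq_zero]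
    rw [Finset.filter_eq_empty_iff]
    intro f hf
    simp only [Finset.mem_filter, Finset.mem_univ, true_and] at hf
    intro hfP
    apply h
    intro e he i j hij
    simp only at hij
    have hj : e j ∈ P.part (e j) := P.mem_part (Finset.mem_univ _)
    rw [← hij] at hj
    have h2 : P.part (e i) = (partOf f).part (e i) := by rw [hfP]
    rw [h2] at hj
    have hfij : f (e i) = f (e j) := (mem_part_iff f (e i) (e j)).1 hj
    exact H.edge_inj (f ∘ e) (hf e he) hfij


lemma part_bot' {α : Type*} [DecidableEq α] (s : Finset α) (a : α) (ha : a ∈ s) :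
    (⊥ : Finpartition s).part a = {a} := by
  apply Finpartition.part_eq_of_mem
  · rw [Finpartition.mem_bot_iff]; exact ⟨a, ha, rfl⟩
  · exact Finset.mem_singleton_self a

lemma quotUniform_bot (F : HyperGraph k V) :
    QuotUniform F (⊥ : Finpartition (Finset.univ : Finset V)) := by
  intro e he i j hij
  simp only at hij
  rw [part_bot' _ _ (Finset.mem_univ _), part_bot' _ _ (Finset.mem_univ _)] at hij
  exact F.edge_inj e he (Finset.singleton_injective hij)

lemma injHomCount_quot_bot (F : HyperGraph k V) (H : HyperGraph k W) :
    injHomCount (quotHG F ⊥ (quotUniform_bot F)) H = injHomCount F H := by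
  classical
  set B : Finpartition (Finset.univ : Finset V) := ⊥ with hB
  have hmem : ∀ a : V, ({a} : Finset V) ∈ B.parts := by
    intro a
    rw [hB, Finpartition.mem_bot_iff]
    exact ⟨a, Finset.mem_univ a, rfl⟩
  have hbij : Function.Bijective (fun a : V => (⟨{a}, hmem a⟩ : {s // s ∈ B.parts})) := by
    constructor
    · intro a b hab
      exact Finset.singleton_injective (congrArg Subtype.val hab)
    · rintro ⟨t, ht⟩
      rw [hB, Finpartition.mem_bot_iff] at ht
      obtain ⟨a, _, rfl⟩ := ht
      exact ⟨a, rfl⟩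
  set φ : V ≃ {s // s ∈ B.parts} := Equiv.ofBijective _ hbij with hφ
  have hedge : ∀ e : Fin k → V, e ∈ F.edges ↔ ⇑φ ∘ e ∈ (quotHG F B (quotUniform_bot F)).edges := by
    intro e
    constructor
    · intro he
      simp only [quotHG, Finset.mem_image]
      refine ⟨e, he, ?_⟩
      funext j
      apply Subtype.ext
      show B.part (e j) = ({e j} : Finset V)
      rw [hB]
      exact part_bot' _ _ (Finset.mem_univ _)
    · intro hq
      simp only [quotHG, Finset.mem_image] at hq
      obtain ⟨e', he', heq⟩ := hq
      have he'e : e' = e := by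
        funext j
        have h2 : B.part (e' j) = ({e j} : Finset V) := congrArg Subtype.val (congrFun heq j)
        have h3 : B.part (e' j) = ({e' j} : Finset V) := part_bot' _ _ (Finset.mem_univ _)
        exact Finset.singleton_injective (h3.symm.trans h2)
      rwa [← he'e]
  exact (injHomCount_congr φ F (quotHG F B (quotUniform_bot F)) hedge H).symm

lemma parts_card_lt {α : Type*} [DecidableEq α] {s : Finset α} {P : Finpartition s}
    (hP : P ≠ ⊥) : P.parts.card < s.card := by
  refine lt_of_le_of_ne P.card_parts_le_card (fun hcard => hP ?_)
  have hsum : ∑ t ∈ P.parts, t.card = s.card := P.sum_card_parts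
  have hle : ∀ t ∈ P.parts, 1 ≤ t.card :=
    fun t ht => Finset.card_pos.2 (P.nonempty_of_mem_parts ht)
  have hsum1 : ∑ _t ∈ P.parts, 1 = ∑ t ∈ P.parts, t.card := by
    rw [Finset.sum_const, smul_eq_mul, mul_one, hsum, hcard]
  have hone : ∀ t ∈ P.parts, t.card = 1 := by
    intro t ht
    exact ((Finset.sum_eq_sum_iff_of_le hle).1 hsum1 t ht).symm
  apply le_antisymm ?_ bot_le
  intro t ht
  obtain ⟨a, rfl⟩ := Finset.card_eq_one.1 (hone t ht)
  have ha : a ∈ s := (P.le ht) (Finset.mem_singleton_self a)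
  refine ⟨{a}, ?_, le_rfl⟩
  rw [Finpartition.mem_bot_iff]
  exact ⟨a, ha, rfl⟩

lemma injHomCount_eq_of_homCount_eq (H₁ : HyperGraph k V) (H₂ : HyperGraph k W)
    (h : ∀ (n : ℕ) (F : HyperGraph k (Fin n)), homCount F H₁ = homCount F H₂) :
    ∀ (n : ℕ) (F : HyperGraph k (Fin n)), injHomCount F H₁ = injHomCount F H₂ := by
  intro n
  induction n using Nat.strong_induction_on with
  | _ n ih =>
    intro F
    have hhom := h n F
    rw [homCount_eq_sum F H₁, homCount_eq_sum F H₂] at hhom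
    rw [← Finset.add_sum_erase _ _ (Finset.mem_univ ⊥),
      ← Finset.add_sum_erase _ _ (Finset.mem_univ ⊥)] at hhom
    have htail : ∑ P ∈ Finset.univ.erase (⊥ : Finpartition (Finset.univ : Finset (Fin n))),
          (if hP : QuotUniform F P then injHomCount (quotHG F P hP) H₁ else 0)
        = ∑ P ∈ Finset.univ.erase (⊥ : Finpartition (Finset.univ : Finset (Fin n))),
          (if hP : QuotUniform F P then injHomCount (quotHG F P hP) H₂ else 0) := by
      apply Finset.sum_congr rfl
      intro P hPmem
      by_cases hP : QuotUniform F P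
      · rw [dif_pos hP, dif_pos hP]
        have hPne : P ≠ ⊥ := (Finset.mem_erase.1 hPmem).1
        have hlt : P.parts.card < n := by
          have := parts_card_lt hPne
          simpa using this
        have hcardeq : Fintype.card {s // s ∈ P.parts} = P.parts.card := Fintype.card_coe _
        let ψ : {s // s ∈ P.parts} ≃ Fin (P.parts.card) := Fintype.equivFinOfCardEq hcardeq
        rw [injHomCount_congr ψ (quotHG F P hP) ((quotHG F P hP).reindex ψ)
            ((quotHG F P hP).mem_reindex ψ) H₁,
          injHomCount_congr ψ (quotHG F P hP) ((quotHG F P hP).reindex ψ)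
            ((quotHG F P hP).mem_reindex ψ) H₂]
        exact ih _ hlt _
      · rw [dif_neg hP, dif_neg hP]
    rw [htail] at hhom
    have hhead := Nat.add_right_cancel hhom
    rw [dif_pos (quotUniform_bot F), dif_pos (quotUniform_bot F)] at hhead
    rw [← injHomCount_quot_bot F H₁, ← injHomCount_quot_bot F H₂]
    exact hhead

end Main

/-- If two finite `k`-uniform hypergraphs receive the same number of homomorphisms from
every finite `k`-uniform hypergraph, then they are isomorphic. -/
theorem iso_of_homCount_eq (H₁ : HyperGraph k V) (H₂ : HyperGraph k W)
    (h : ∀ (n : ℕ) (F : HyperGraph k (Fin n)), homCount F H₁ = homCount F H₂) :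
    ∃ e : V ≃ W, ∀ f : Fin k → V, f ∈ H₁.edges ↔ (⇑e ∘ f) ∈ H₂.edges := by
  classical
  have hinj := injHomCount_eq_of_homCount_eq H₁ H₂ h
  obtain ⟨g₁, hg₁hom, hg₁inj⟩ : ∃ g : V → W, IsHom H₁ H₂ g ∧ Function.Injective g := by
    set φ := Fintype.equivFin V with hφ
    set F₁ := H₁.reindex φ with hF₁
    have hid : IsHom F₁ H₁ (⇑φ.symm) ∧ Function.Injective ⇑φ.symm := by
      refine ⟨?_, φ.symm.injective⟩
      intro e he
      apply (H₁.mem_reindex φ (⇑φ.symm ∘ e)).2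
      have hc : ⇑φ ∘ (⇑φ.symm ∘ e) = e := funext fun j => by simp
      rw [hc]
      exact he
    have pos1 : 0 < injHomCount F₁ H₁ := by
      unfold injHomCount
      apply Finset.card_pos.2
      exact ⟨⇑φ.symm, by simp only [Finset.mem_filter, Finset.mem_univ, true_and]; exact hid⟩
    have pos2 : 0 < injHomCount F₁ H₂ := by rw [← hinj _ F₁]; exact pos1
    unfold injHomCount at pos2
    obtain ⟨f, hf⟩ := Finset.card_pos.1 pos2
    simp only [Finset.mem_filter, Finset.mem_univ, true_and] at hf
    refine ⟨f ∘ ⇑φ, ?_, hf.2.comp φ.injective⟩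
    intro e he
    have h1 : ⇑φ ∘ e ∈ F₁.edges := (H₁.mem_reindex φ e).1 he
    have h2 := hf.1 _ h1
    simpa [Function.comp_assoc] using h2
  obtain ⟨g₂, hg₂hom, hg₂inj⟩ : ∃ g : W → V, IsHom H₂ H₁ g ∧ Function.Injective g := by
    set φ := Fintype.equivFin W with hφ
    set F₂ := H₂.reindex φ with hF₂
    have hid : IsHom F₂ H₂ (⇑φ.symm) ∧ Function.Injective ⇑φ.symm := by
      refine ⟨?_, φ.symm.injective⟩
      intro e he
      apply (H₂.mem_reindex φ (⇑φ.symm ∘ e)).2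
      have hc : ⇑φ ∘ (⇑φ.symm ∘ e) = e := funext fun j => by simp
      rw [hc]
      exact he
    have pos1 : 0 < injHomCount F₂ H₂ := by
      unfold injHomCount
      apply Finset.card_pos.2
      exact ⟨⇑φ.symm, by simp only [Finset.mem_filter, Finset.mem_univ, true_and]; exact hid⟩
    have pos2 : 0 < injHomCount F₂ H₁ := by rw [hinj _ F₂]; exact pos1
    unfold injHomCount at pos2
    obtain ⟨f, hf⟩ := Finset.card_pos.1 pos2
    simp only [Finset.mem_filter, Finset.mem_univ, true_and] at hf
    refine ⟨f ∘ ⇑φ, ?_, hf.2.comp φ.injective⟩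
    intro e he
    have h1 : ⇑φ ∘ e ∈ F₂.edges := (H₂.mem_reindex φ e).1 he
    have h2 := hf.1 _ h1
    simpa [Function.comp_assoc] using h2
  have hcard : Fintype.card V = Fintype.card W :=
    le_antisymm (Fintype.card_le_of_injective g₁ hg₁inj) (Fintype.card_le_of_injective g₂ hg₂inj)
  have hbij : Function.Bijective g₁ :=
    (Fintype.bijective_iff_injective_and_card g₁).2 ⟨hg₁inj, hcard⟩
  have hcomp_hom : IsHom H₁ H₁ (g₂ ∘ g₁) := by
    intro e he
    have h1 := hg₁hom e he
    have h2 := hg₂hom _ h1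
    simpa [Function.comp_assoc] using h2
  have hcomp_inj : Function.Injective (g₂ ∘ g₁) := hg₂inj.comp hg₁inj
  have hreflect : ∀ e : Fin k → V, (g₂ ∘ g₁) ∘ e ∈ H₁.edges → e ∈ H₁.edges := by
    intro e he
    have hsurj := Finset.surj_on_of_inj_on_of_card_le (s := H₁.edges) (t := H₁.edges)
      (fun x _ => (g₂ ∘ g₁) ∘ x) (fun x hx => hcomp_hom x hx)
      (fun x₁ x₂ _ _ hx => funext fun j => hcomp_inj (congrFun hx j)) le_rfl
    obtain ⟨e', he', heq⟩ := hsurj _ he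
    have hee : e = e' := funext fun j => hcomp_inj (congrFun heq j)
    rwa [hee]
  refine ⟨Equiv.ofBijective g₁ hbij, ?_⟩
  intro f
  constructor
  · intro hf
    exact hg₁hom f hf
  · intro hf
    apply hreflect
    have h2 := hg₂hom _ hf
    simpa [Function.comp_assoc] using h2
end

section
/- If H1 and H2 are finite k-uniform hypergraphs with t(F,H1) = t(F,H2) for every finite k-uniform hypergraph F, then there exists a k-uniform hypergraph H which is simultaneously an equitable blowup of H1 and an equitable blowup of H2 (namely, the |V(H2)|-fold blowup of H1 is isomorphic to the |V(H1)|-fold blowup of H2). -/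
open Finset

variable {k : ℕ} {V W : Type} [DecidableEq V] [Fintype V] [DecidableEq W] [Fintype W]

/-- The homomorphism density `t(F,H) = hom(F,H) / |V(H)|^{|V(F)|}`. -/
noncomputable def homDensity (F : HyperGraph k V) (H : HyperGraph k W) : ℝ :=
  (homCount F H : ℝ) / (Fintype.card W : ℝ) ^ (Fintype.card V)

/-- The `t`-fold equitable blowup of `H`: each vertex is replaced by `t` copies and each
edge by the complete `k`-partite hypergraph on the corresponding classes of copies. -/
def blowup (H : HyperGraph k V) (t : ℕ) : HyperGraph k (V × Fin t) where
  edges := Finset.univ.filter (fun g : Fin k → V × Fin t => (Prod.fst ∘ g) ∈ H.edges)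
  perm_mem := by
    intro σ g hg
    simp only [Finset.mem_filter, Finset.mem_univ, true_and] at hg ⊢
    exact H.perm_mem σ _ hg
  edge_inj := by
    intro g hg
    simp only [Finset.mem_filter, Finset.mem_univ, true_and] at hg
    intro a b hab
    exact H.edge_inj _ hg (congrArg Prod.fst hab)


variable {k : ℕ} {A B V W : Type} [DecidableEq A] [Fintype A] [DecidableEq B] [Fintype B]
  [DecidableEq V] [Fintype V] [DecidableEq W] [Fintype W]

lemma homCount_eq_nat_card (F : HyperGraph k V) (H : HyperGraph k W) :
    homCount F H = Nat.card {f : V → W // IsHom F H f} := by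
  classical
  rw [homCount, Nat.card_eq_fintype_card, Fintype.card_subtype]

lemma injHomCount_eq_nat_card (F : HyperGraph k V) (H : HyperGraph k W) :
    injHomCount F H = Nat.card {f : V → W // IsHom F H f ∧ Function.Injective f} := by
  classical
  rw [injHomCount, Nat.card_eq_fintype_card, Fintype.card_subtype]
  congr!

/-- Relabelling the vertices of a hypergraph along an equivalence. -/
def relabel (F : HyperGraph k A) (e : A ≃ B) : HyperGraph k B where
  edges := F.edges.image (fun g => ⇑e ∘ g)
  perm_mem := by
    intro σ g hg
    simp only [Finset.mem_image] at hg ⊢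
    obtain ⟨g', hg', rfl⟩ := hg
    exact ⟨g' ∘ σ, F.perm_mem σ g' hg', rfl⟩
  edge_inj := by
    intro g hg
    simp only [Finset.mem_image] at hg
    obtain ⟨g', hg', rfl⟩ := hg
    exact e.injective.comp (F.edge_inj g' hg')

lemma isHom_relabel {F : HyperGraph k A} {e : A ≃ B} {H : HyperGraph k W} {f : B → W} :
    IsHom (relabel F e) H f ↔ IsHom F H (f ∘ ⇑e) := by
  constructor
  · intro hf g hg
    exact hf (⇑e ∘ g) (Finset.mem_image_of_mem _ hg)
  · intro hf g hg
    simp only [relabel, Finset.mem_image] at hg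
    obtain ⟨g', hg', rfl⟩ := hg
    exact hf g' hg'

lemma homCount_relabel (F : HyperGraph k A) (e : A ≃ B) (H : HyperGraph k W) :
    homCount (relabel F e) H = homCount F H := by
  rw [homCount_eq_nat_card, homCount_eq_nat_card]
  exact Nat.card_congr (Equiv.subtypeEquiv (Equiv.arrowCongr e (Equiv.refl W)).symm
    (fun f => by simpa [Equiv.arrowCongr, Function.comp_def] using isHom_relabel))

lemma injHomCount_relabel (F : HyperGraph k A) (e : A ≃ B) (H : HyperGraph k W) :
    injHomCount (relabel F e) H = injHomCount F H := by
  rw [injHomCount_eq_nat_card, injHomCount_eq_nat_card]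
  refine Nat.card_congr (Equiv.subtypeEquiv (Equiv.arrowCongr e (Equiv.refl W)).symm
    (fun f => ?_))
  have hiff : IsHom (relabel F e) H f ↔ IsHom F H (f ∘ ⇑e) := isHom_relabel
  have hinj : Function.Injective f ↔ Function.Injective (f ∘ ⇑e) := by
    constructor
    · exact fun h => h.comp e.injective
    · intro h
      have h2 : Function.Injective ((f ∘ ⇑e) ∘ ⇑e.symm) := h.comp e.symm.injective
      have : f = (f ∘ ⇑e) ∘ ⇑e.symm := by ext x; simp
      rw [this]; exact h2
  simpa [Equiv.arrowCongr, Function.comp_def] using and_congr hiff hinj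
/-- Pushforward of a hypergraph along a map, keeping only the edge images that
remain injective. -/
def push (F : HyperGraph k A) (p : A → B) : HyperGraph k B where
  edges := (F.edges.image (fun g => p ∘ g)).filter (fun g => Function.Injective g)
  perm_mem := by
    classical
    intro σ g hg
    simp only [Finset.mem_filter, Finset.mem_image] at hg ⊢
    obtain ⟨⟨g', hg', rfl⟩, hinj⟩ := hg
    exact ⟨⟨g' ∘ σ, F.perm_mem σ g' hg', rfl⟩, hinj.comp σ.injective⟩
  edge_inj := by
    classical
    intro g hg
    simp only [Finset.mem_filter] at hg
    exact hg.2

lemma isHom_push {F : HyperGraph k A} {p : A → B} {H : HyperGraph k W} {g : B → W}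
    (hEI : ∀ e ∈ F.edges, Function.Injective (p ∘ e)) :
    IsHom (push F p) H g ↔ IsHom F H (g ∘ p) := by
  classical
  constructor
  · intro hg e he
    have : p ∘ e ∈ (push F p).edges := by
      simp only [push, Finset.mem_filter, Finset.mem_image]
      exact ⟨⟨e, he, rfl⟩, hEI e he⟩
    exact hg (p ∘ e) this
  · intro hg e he
    simp only [push, Finset.mem_filter, Finset.mem_image] at he
    obtain ⟨⟨e', he', rfl⟩, _⟩ := he
    exact hg e' he'

lemma isHom_blowup {F : HyperGraph k A} {H : HyperGraph k V} {t : ℕ}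
    {f : A → V × Fin t} :
    IsHom F (blowup H t) f ↔ IsHom F H (Prod.fst ∘ f) := by
  constructor
  · intro hf e he
    have := hf e he
    simp only [blowup, Finset.mem_filter, Finset.mem_univ, true_and] at this
    exact this
  · intro hf e he
    simp only [blowup, Finset.mem_filter, Finset.mem_univ, true_and]
    exact hf e he

lemma homCount_blowup (F : HyperGraph k A) (H : HyperGraph k V) (t : ℕ) :
    homCount F (blowup H t) = homCount F H * t ^ (Fintype.card A) := by
  rw [homCount_eq_nat_card, homCount_eq_nat_card]
  have e : {f : A → V × Fin t // IsHom F (blowup H t) f} ≃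
      {g : A → V // IsHom F H g} × (A → Fin t) := by
    refine
      { toFun := fun f => ⟨⟨Prod.fst ∘ f.1, isHom_blowup.mp f.2⟩, fun a => (f.1 a).2⟩
        invFun := fun gh => ⟨fun a => (gh.1.1 a, gh.2 a), ?_⟩
        left_inv := fun f => by ext a <;> simp
        right_inv := fun gh => by
          refine Prod.ext (Subtype.ext ?_) ?_ <;> ext a <;> simp }
    · refine isHom_blowup.mpr ?_
      have : (Prod.fst ∘ fun a => (gh.1.1 a, gh.2 a)) = gh.1.1 := rfl
      rw [this]; exact gh.1.2
  rw [Nat.card_congr e, Nat.card_prod, Nat.card_fun]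
  simp [Nat.card_eq_fintype_card]
set_option linter.unusedSectionVars false
section kernel

variable {n : ℕ}

/-- The kernel map of `f`: each index goes to the least index with the same value. -/
def qf (f : Fin n → W) (i : Fin n) : Fin n :=
  (Finset.univ.filter (fun j => f j = f i)).min' ⟨i, by simp⟩

lemma qf_apply_eq (f : Fin n → W) (i : Fin n) : f (qf f i) = f i := by
  have := Finset.min'_mem (Finset.univ.filter (fun j => f j = f i)) ⟨i, by simp⟩
  simpa [qf] using this

lemma qf_le (f : Fin n → W) (i : Fin n) : qf f i ≤ i :=
  Finset.min'_le _ _ (by simp)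

lemma qf_le_of_eq {f : Fin n → W} {i j : Fin n} (h : f j = f i) : qf f i ≤ j :=
  Finset.min'_le _ _ (by simp [h])

lemma qf_congr {f : Fin n → W} {i j : Fin n} (h : f j = f i) : qf f j = qf f i := by
  unfold qf
  congr 1
  ext x
  simp [h]

lemma qf_idem (f : Fin n → W) (i : Fin n) : qf f (qf f i) = qf f i :=
  qf_congr (qf_apply_eq f i)

/-- A kernel map: idempotent and decreasing. -/
def IsKer (q : Fin n → Fin n) : Prop := (∀ i, q (q i) = q i) ∧ (∀ i, q i ≤ i)

lemma isKer_qf (f : Fin n → W) : IsKer (qf f) := ⟨qf_idem f, qf_le f⟩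

lemma qf_eq_id_iff {f : Fin n → W} : qf f = id ↔ Function.Injective f := by
  constructor
  · intro h a b hab
    have := qf_congr hab
    rw [h] at this
    exact this
  · intro hf
    funext i
    exact hf (qf_apply_eq f i)

/-- The projection onto the fixed points of a kernel map. -/
def kerProj (q : Fin n → Fin n) (hq : IsKer q) (i : Fin n) : {i : Fin n // q i = i} :=
  ⟨q i, hq.1 i⟩

/-- Functions with kernel `q` that are homomorphisms correspond to injective
homomorphisms of the pushforward. -/
def fiber_equiv (F : HyperGraph k (Fin n)) (H : HyperGraph k W)
    (q : Fin n → Fin n) (hq : IsKer q)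
    (hEI : ∀ e ∈ F.edges, Function.Injective (kerProj q hq ∘ e)) :
    {f : Fin n → W // IsHom F H f ∧ qf f = q} ≃
      {g : {i : Fin n // q i = i} → W //
        IsHom (push F (kerProj q hq)) H g ∧ Function.Injective g} := by
  refine
    { toFun := fun f => ⟨fun r => f.1 r.1, ?_, ?_⟩
      invFun := fun g => ⟨g.1 ∘ kerProj q hq, ?_, ?_⟩
      left_inv := ?_
      right_inv := ?_ }
  · -- IsHom of push
    obtain ⟨f, hf, hker⟩ := f
    refine (isHom_push hEI).mpr ?_
    have hfq : (fun r : {i : Fin n // q i = i} => f r.1) ∘ kerProj q hq = f := by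
      funext i
      show f (q i) = f i
      rw [← hker]
      exact qf_apply_eq f i
    rw [hfq]; exact hf
  · -- injectivity
    obtain ⟨f, hf, hker⟩ := f
    rintro ⟨r, hr⟩ ⟨s, hs⟩ hrs
    have h1 : f r = f s := hrs
    have h2 : qf f r = qf f s := qf_congr h1
    rw [hker] at h2
    refine Subtype.ext ?_
    show r = s
    rw [← hr, ← hs]
    exact h2
  · -- IsHom back
    exact (isHom_push hEI).mp g.2.1
  · -- kernel is q
    obtain ⟨g, hg, hinj⟩ := g
    funext i
    show qf (g ∘ kerProj q hq) i = q i
    have key : ∀ j, (g ∘ kerProj q hq) j = (g ∘ kerProj q hq) i ↔ q j = q i := by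
      intro j
      constructor
      · intro hj
        have := hinj hj
        exact congrArg Subtype.val this
      · intro hj
        show g ⟨q j, _⟩ = g ⟨q i, _⟩
        congr 1
        exact Subtype.ext hj
    refine le_antisymm (qf_le_of_eq ((key (q i)).mpr (hq.1 i))) ?_
    refine Finset.le_min' _ _ _ ?_
    intro j hj
    simp only [Finset.mem_filter, Finset.mem_univ, true_and] at hj
    have : q j = q i := (key j).mp hj
    calc q i = q j := this.symm
    _ ≤ j := hq.2 j
  · rintro ⟨f, hf, hker⟩
    apply Subtype.ext
    funext i
    show f (q i) = f i
    rw [← hker]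
    exact qf_apply_eq f i
  · rintro ⟨g, hg, hinj⟩
    apply Subtype.ext
    funext r
    show g ⟨q r.1, _⟩ = g r
    congr 1
    exact Subtype.ext r.2

end kernel
lemma card_filter_univ {α : Type*} [Fintype α] [DecidableEq α] (p : α → Prop)
    [DecidablePred p] : (Finset.univ.filter p).card = Nat.card {x // p x} := by
  rw [Nat.card_eq_fintype_card, Fintype.card_subtype]
  all_goals congr!

lemma kerProj_comp_inj_iff {n : ℕ} {q : Fin n → Fin n} (hq : IsKer q) (e : Fin k → Fin n) :
    Function.Injective (kerProj q hq ∘ e) ↔ Function.Injective (q ∘ e) := by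
  constructor
  · intro h a b hab
    exact h (Subtype.ext hab)
  · intro h a b hab
    exact h (congrArg Subtype.val hab)

open scoped Classical in
/-- The number of homomorphisms with kernel `q`, expressed target-independently in terms
of injective homomorphism counts of smaller hypergraphs. -/
noncomputable def fiberVal {n : ℕ} (F : HyperGraph k (Fin n)) (H : HyperGraph k W)
    (q : Fin n → Fin n) : ℕ :=
  if h : IsKer q ∧ ∀ e ∈ F.edges, Function.Injective (q ∘ e) then
    injHomCount (push F (kerProj q h.1)) H
  else 0

lemma fiber_card {n : ℕ} (F : HyperGraph k (Fin n)) (H : HyperGraph k W)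
    (q : Fin n → Fin n) :
    Nat.card {f : Fin n → W // IsHom F H f ∧ qf f = q} = fiberVal F H q := by
  classical
  by_cases h : IsKer q ∧ ∀ e ∈ F.edges, Function.Injective (q ∘ e)
  · unfold fiberVal
    rw [dif_pos h]
    rw [Nat.card_congr (fiber_equiv F H q h.1
      (fun e he => (kerProj_comp_inj_iff h.1 e).mpr (h.2 e he)))]
    rw [injHomCount_eq_nat_card]
  · unfold fiberVal
    rw [dif_neg h]
    rw [Nat.card_eq_zero]
    left
    rw [isEmpty_subtype]
    rintro f ⟨hf, hker⟩
    apply h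
    subst hker
    refine ⟨isKer_qf f, fun e he a b hab => ?_⟩
    have h1 : f (qf f (e a)) = f (qf f (e b)) := congrArg f hab
    rw [qf_apply_eq f (e a), qf_apply_eq f (e b)] at h1
    exact H.edge_inj _ (hf e he) h1

lemma homCount_decomp {n : ℕ} (F : HyperGraph k (Fin n)) (H : HyperGraph k W) :
    homCount F H = injHomCount F H +
      ∑ q ∈ (Finset.univ : Finset (Fin n → Fin n)).erase id, fiberVal F H q := by
  classical
  have h1 : homCount F H = ∑ q ∈ (Finset.univ : Finset (Fin n → Fin n)),
      ((Finset.univ.filter (IsHom F H)).filter (fun f => qf f = q)).card := by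
    rw [homCount]
    congr! 1
    exact Finset.card_eq_sum_card_fiberwise (fun f _ => Finset.mem_univ (qf f))
  have h2 : ∀ q, ((Finset.univ.filter (IsHom F H)).filter (fun f => qf f = q)).card =
      Nat.card {f : Fin n → W // IsHom F H f ∧ qf f = q} := by
    intro q
    rw [Finset.filter_filter]
    exact card_filter_univ _
  rw [h1]
  rw [← Finset.add_sum_erase _ _ (Finset.mem_univ id)]
  congr 1
  · rw [h2, injHomCount_eq_nat_card]
    exact Nat.card_congr (Equiv.subtypeEquivRight (fun f =>
      and_congr_right (fun _ => qf_eq_id_iff)))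
  · exact Finset.sum_congr rfl (fun q _ => by rw [h2, fiber_card])

lemma injHomCount_eq_of_homCount_eq_s4 {W₁ W₂ : Type} [DecidableEq W₁] [Fintype W₁]
    [DecidableEq W₂] [Fintype W₂] (H₁' : HyperGraph k W₁) (H₂' : HyperGraph k W₂)
    (hh : ∀ (n : ℕ) (F : HyperGraph k (Fin n)), homCount F H₁' = homCount F H₂') :
    ∀ (n : ℕ) (F : HyperGraph k (Fin n)), injHomCount F H₁' = injHomCount F H₂' := by
  intro n
  induction n using Nat.strong_induction_on with
  | _ n IH =>
    intro F
    have hsum : ∑ q ∈ (Finset.univ : Finset (Fin n → Fin n)).erase id, fiberVal F H₁' q =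
        ∑ q ∈ (Finset.univ : Finset (Fin n → Fin n)).erase id, fiberVal F H₂' q := by
      refine Finset.sum_congr rfl (fun q hq => ?_)
      have hqne : q ≠ id := (Finset.mem_erase.mp hq).1
      by_cases hc : IsKer q ∧ ∀ e ∈ F.edges, Function.Injective (q ∘ e)
      · unfold fiberVal
        rw [dif_pos hc, dif_pos hc]
        set R := {i : Fin n // q i = i}
        have hm : Fintype.card R < n := by
          obtain ⟨i₀, hi₀⟩ : ∃ i, q i ≠ i := by
            by_contra hcon
            push_neg at hcon
            exact hqne (funext hcon)
          have := Fintype.card_subtype_lt (p := fun i : Fin n => q i = i) hi₀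
          simpa using this
        have e := Fintype.equivFin R
        rw [← injHomCount_relabel (push F (kerProj q hc.1)) e H₁',
          ← injHomCount_relabel (push F (kerProj q hc.1)) e H₂']
        exact IH _ hm _
      · unfold fiberVal
        rw [dif_neg hc, dif_neg hc]
    have d1 := homCount_decomp F H₁'
    have d2 := homCount_decomp F H₂'
    rw [hh n F, d2, hsum] at d1
    exact (Nat.add_right_cancel d1).symm
lemma injHomCount_pos_self (G : HyperGraph k V) : 0 < injHomCount G G := by
  rw [injHomCount_eq_nat_card]
  rw [Nat.card_pos_iff]
  refine ⟨⟨⟨id, fun e he => by simpa using he, Function.injective_id⟩⟩, inferInstance⟩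

lemma exists_inj_hom {W₁ W₂ : Type} [DecidableEq W₁] [Fintype W₁]
    [DecidableEq W₂] [Fintype W₂] {G₁ : HyperGraph k W₁} {G₂ : HyperGraph k W₂}
    (hpos : 0 < injHomCount (relabel G₁ (Fintype.equivFin W₁)) G₂) :
    ∃ φ : W₁ → W₂, IsHom G₁ G₂ φ ∧ Function.Injective φ := by
  rw [injHomCount_eq_nat_card, Nat.card_pos_iff] at hpos
  obtain ⟨⟨f, hf, hfi⟩⟩ := hpos.1
  exact ⟨f ∘ ⇑(Fintype.equivFin W₁), isHom_relabel.mp hf,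
    hfi.comp (Fintype.equivFin W₁).injective⟩

theorem blowups_iso_of_homDensity_eq' [Nonempty V] [Nonempty W]
    (H₁ : HyperGraph k V) (H₂ : HyperGraph k W)
    (h : ∀ (n : ℕ) (F : HyperGraph k (Fin n)), homDensity F H₁ = homDensity F H₂) :
    ∃ e : V × Fin (Fintype.card W) ≃ W × Fin (Fintype.card V),
      ∀ f : Fin k → V × Fin (Fintype.card W),
        f ∈ (blowup H₁ (Fintype.card W)).edges ↔
          (⇑e ∘ f) ∈ (blowup H₂ (Fintype.card V)).edges := by
  classical
  set B₁ := blowup H₁ (Fintype.card W) with hB₁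
  set B₂ := blowup H₂ (Fintype.card V) with hB₂
  have hVpos : (0 : ℝ) < Fintype.card V := by exact_mod_cast Fintype.card_pos
  have hWpos : (0 : ℝ) < Fintype.card W := by exact_mod_cast Fintype.card_pos
  -- equal hom counts into the two blowups
  have hhom : ∀ (n : ℕ) (F : HyperGraph k (Fin n)), homCount F B₁ = homCount F B₂ := by
    intro n F
    have h1 : homCount F B₁ = homCount F H₁ * Fintype.card W ^ n := by
      rw [hB₁, homCount_blowup, Fintype.card_fin]
    have h2 : homCount F B₂ = homCount F H₂ * Fintype.card V ^ n := by
      rw [hB₂, homCount_blowup, Fintype.card_fin]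
    have hd := h n F
    rw [homDensity, homDensity, Fintype.card_fin, div_eq_div_iff (by positivity)
      (by positivity)] at hd
    have : (homCount F B₁ : ℝ) = homCount F B₂ := by
      rw [h1, h2]
      push_cast
      linarith [hd]
    exact_mod_cast this
  have hinj := injHomCount_eq_of_homCount_eq_s4 B₁ B₂ hhom
  -- injective homomorphism `B₁ → B₂`
  obtain ⟨φ, hφ, hφi⟩ : ∃ φ, IsHom B₁ B₂ φ ∧ Function.Injective φ := by
    apply exists_inj_hom
    rw [← hinj _ _]
    rw [injHomCount_relabel]
    exact injHomCount_pos_self B₁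
  -- injective homomorphism `B₂ → B₁`
  obtain ⟨ψ, hψ, hψi⟩ : ∃ ψ, IsHom B₂ B₁ ψ ∧ Function.Injective ψ := by
    apply exists_inj_hom
    rw [hinj _ _]
    rw [injHomCount_relabel]
    exact injHomCount_pos_self B₂
  -- the composite reflects edges
  have hcomp : Function.Injective (fun g : Fin k → V × Fin (Fintype.card W) =>
      (ψ ∘ φ) ∘ g) := fun g g' hgg => funext fun a => (hψi.comp hφi) (congrFun hgg a)
  have hsub : B₁.edges.image (fun g => (ψ ∘ φ) ∘ g) ⊆ B₁.edges := by
    intro g hg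
    simp only [Finset.mem_image] at hg
    obtain ⟨g', hg', rfl⟩ := hg
    have : (ψ ∘ φ) ∘ g' = ψ ∘ (φ ∘ g') := rfl
    rw [this]
    exact hψ _ (hφ _ hg')
  have himg : B₁.edges.image (fun g => (ψ ∘ φ) ∘ g) = B₁.edges :=
    Finset.eq_of_subset_of_card_le hsub
      (le_of_eq (Finset.card_image_of_injective _ hcomp).symm)
  have hback : ∀ g, (ψ ∘ φ) ∘ g ∈ B₁.edges → g ∈ B₁.edges := by
    intro g hg
    rw [← himg] at hg
    simp only [Finset.mem_image] at hg
    obtain ⟨g', hg', hgg⟩ := hg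
    rwa [← hcomp hgg]
  -- φ is a bijection
  have hbij : Function.Bijective φ := by
    rw [Fintype.bijective_iff_injective_and_card]
    exact ⟨hφi, by simp [mul_comm]⟩
  refine ⟨Equiv.ofBijective φ hbij, fun f => ?_⟩
  constructor
  · intro hf
    exact hφ f hf
  · intro hf
    apply hback
    have : (ψ ∘ φ) ∘ f = ψ ∘ (φ ∘ f) := rfl
    rw [this]
    exact hψ _ hf

/-- If two `k`-uniform hypergraphs have equal homomorphism densities `t(F,·)` for every
finite `k`-uniform hypergraph `F`, then some hypergraph is an equitable blowup of both:
concretely, the `|V(H₂)|`-fold blowup of `H₁` is isomorphic to the `|V(H₁)|`-fold blowup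
of `H₂`. -/
theorem blowups_iso_of_homDensity_eq [Nonempty V] [Nonempty W]
    (H₁ : HyperGraph k V) (H₂ : HyperGraph k W)
    (h : ∀ (n : ℕ) (F : HyperGraph k (Fin n)), homDensity F H₁ = homDensity F H₂) :
    ∃ e : V × Fin (Fintype.card W) ≃ W × Fin (Fintype.card V),
      ∀ f : Fin k → V × Fin (Fintype.card W),
        f ∈ (blowup H₁ (Fintype.card W)).edges ↔
          (⇑e ∘ f) ∈ (blowup H₂ (Fintype.card V)).edges := by
  exact blowups_iso_of_homDensity_eq' H₁ H₂ h
end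

section
/- Let X be the ultraproduct of finite sets X_i with respect to a nonprincipal ultrafilter ω, and let P be the Boolean algebra of ultraproduct (internal) subsets with the finitely additive measure μ(A) = lim_ω |A_i|/|X_i|. If {A_k} is a countable family of sets in P with lim_{l→∞} μ(A_1 ∪ ⋯ ∪ A_l) = t, then there exists B ∈ P with μ(B) = t and A_k ⊆ B for all k. -/
open Filter Set

/-- The equivalence relation of `ω`-almost-everywhere equality on `∏ᵢ Xᵢ`. -/
def upSetoid (X : ℕ → Type) (ω : Ultrafilter ℕ) : Setoid (∀ i, X i) where
  r p q := {i | p i = q i} ∈ ω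
  iseqv := by
    refine ⟨fun p => ?_, fun {p q} h => ?_, fun {p q r} h₁ h₂ => ?_⟩
    · simp only [eq_self_iff_true, Set.setOf_true]
      exact Filter.univ_mem
    · exact Filter.mem_of_superset h (fun i hi => hi.symm)
    · exact Filter.mem_of_superset (Filter.inter_mem h₁ h₂)
        (fun i hi => hi.1.trans hi.2)

/-- The ultraproduct `X = (∏ᵢ Xᵢ)/∼` of the sets `Xᵢ` along the ultrafilter `ω`. -/
def UProd (X : ℕ → Type) (ω : Ultrafilter ℕ) : Type := Quotient (upSetoid X ω)

/-- The internal (ultraproduct) subset `[{Aᵢ}] ⊆ X` determined by sets `Aᵢ ⊆ Xᵢ`. -/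
def internalSet (X : ℕ → Type) (ω : Ultrafilter ℕ) (A : ∀ i, Finset (X i)) :
    Set (UProd X ω) :=
  {x | Quotient.liftOn x (fun p => {i | p i ∈ A i} ∈ ω) (by
    intro p q h
    refine propext ⟨fun hp => ?_, fun hq => ?_⟩
    · exact Filter.mem_of_superset (Filter.inter_mem h hp)
        (fun i hi => by rw [Set.mem_setOf_eq, ← hi.1]; exact hi.2)
    · exact Filter.mem_of_superset (Filter.inter_mem h hq)
        (fun i hi => by rw [Set.mem_setOf_eq, hi.1]; exact hi.2))}

/-- The ultralimit of a real sequence along the ultrafilter `ω`. -/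
noncomputable def ulim (ω : Ultrafilter ℕ) (a : ℕ → ℝ) : ℝ :=
  limUnder (ω : Filter ℕ) a

/-- The finitely additive measure of an internal set: `μ([{Aᵢ}]) = lim_ω |Aᵢ|/|Xᵢ|`. -/
noncomputable def intMeasure (X : ℕ → Type) [∀ i, Fintype (X i)] (ω : Ultrafilter ℕ)
    (A : ∀ i, Finset (X i)) : ℝ :=
  ulim ω (fun i => ((A i).card : ℝ) / (Fintype.card (X i) : ℝ))

/-- Let `X` be the ultraproduct of finite sets `Xᵢ` (of strictly increasing cardinality)
along a nonprincipal ultrafilter `ω`.  If `{A_k}` is a countable family of internal sets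
with `lim_{l→∞} μ(A_0 ∪ ⋯ ∪ A_l) = t`, then there is an internal set `B` with `μ(B) = t`
containing all the `A_k`. -/
theorem internal_countable_union_bound (X : ℕ → Type) [∀ i, Fintype (X i)]
    [∀ i, DecidableEq (X i)]
    (ω : Ultrafilter ℕ) (hω : (ω : Filter ℕ) ≤ Filter.cofinite)
    (hcard : StrictMono fun i => Fintype.card (X i))
    (A : ℕ → ∀ i, Finset (X i)) (t : ℝ)
    (ht : Filter.Tendsto
      (fun l => intMeasure X ω (fun i => (Finset.range (l + 1)).biUnion (fun m => A m i)))
      Filter.atTop (nhds t)) :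
    ∃ B : ∀ i, Finset (X i), intMeasure X ω B = t ∧
      ∀ m, internalSet X ω (A m) ⊆ internalSet X ω B := by
  classical
  set N : ℕ → ℝ := fun i => (Fintype.card (X i) : ℝ) with hNdef
  set C : ℕ → ∀ i, Finset (X i) :=
    fun l i => (Finset.range (l + 1)).biUnion (fun m => A m i) with hCdef
  set μ : ℕ → ℝ := fun l => intMeasure X ω (C l) with hμdef
  have hge : ∀ m : ℕ, {i | m ≤ i} ∈ ω := by
    intro m
    apply hω
    rw [Filter.mem_cofinite]
    exact (Set.finite_Iio m).subset (fun i (hi : i ∈ {i | m ≤ i}ᶜ) => by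
      exact Set.mem_Iio.2 (not_le.1 hi))
  have hNpos : ∀ i : ℕ, 1 ≤ i → 0 < N i := by
    intro i hi
    have h1 : Fintype.card (X 0) < Fintype.card (X i) :=
      lt_of_lt_of_le (hcard Nat.zero_lt_one) (hcard.monotone hi)
    have : 0 < Fintype.card (X i) := lt_of_le_of_lt (Nat.zero_le _) h1
    simp only [hNdef]
    exact_mod_cast this
  have hNnonneg : ∀ i, 0 ≤ N i := fun i => Nat.cast_nonneg _
  have hCmono : ∀ {l l' : ℕ}, l ≤ l' → ∀ i, C l i ⊆ C l' i := by
    intro l l' h i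
    exact Finset.biUnion_subset_biUnion_of_subset_left _
      (Finset.range_subset_range.2 (Nat.add_le_add_right h 1))
  have hAC : ∀ m i, A m i ⊆ C m i := by
    intro m i
    exact Finset.subset_biUnion_of_mem (fun k => A k i)
      (Finset.self_mem_range_succ m)
  -- ultralimit existence for [0,1]-valued sequences (eventually along ω)
  have hulim : ∀ g : ℕ → ℝ, {i | g i ∈ Set.Icc (0:ℝ) 1} ∈ ω →
      Filter.Tendsto g ω (nhds (ulim ω g)) := by
    intro g hg
    obtain ⟨x, -, hx⟩ := isCompact_Icc.ultrafilter_le_nhds (ω.map g)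
      (le_principal_iff.2 hg)
    have hten : Filter.Tendsto g ω (nhds x) := hx
    rwa [ulim, hten.limUnder_eq]
  have hmem01 : ∀ D : ∀ i, Finset (X i),
      {i | ((D i).card : ℝ) / N i ∈ Set.Icc (0:ℝ) 1} ∈ ω := by
    intro D
    filter_upwards [hge 1] with i hi
    have hN := hNpos i hi
    constructor
    · positivity
    · rw [div_le_one hN]
      exact Nat.cast_le.2 (Finset.card_le_univ (D i))
  have hμlim : ∀ l, Filter.Tendsto (fun i => ((C l i).card : ℝ) / N i) ω (nhds (μ l)) :=
    fun l => hulim _ (hmem01 (C l))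
  have hμmono : Monotone μ := by
    intro l l' h
    refine le_of_tendsto_of_tendsto (hμlim l) (hμlim l') ?_
    filter_upwards [hge 1] with i hi
    exact (div_le_div_iff_of_pos_right (hNpos i hi)).2
      (Nat.cast_le.2 (Finset.card_le_card (hCmono h i)))
  have hμle : ∀ l, μ l ≤ t := fun l => hμmono.ge_of_tendsto ht l
  have hμnonneg : ∀ l, 0 ≤ μ l := by
    intro l
    refine ge_of_tendsto (hμlim l) ?_
    filter_upwards [hge 1] with i hi
    positivity
  -- the key predicate and diagonal choice
  set P : ℕ → ℕ → Prop :=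
    fun i l => ∀ l' ≤ l, ((C l' i).card : ℝ) ≤ (μ l' + 1 / (l' + 1)) * N i with hPdef
  have hP0 : ∀ i, P i 0 := by
    intro i l' hl'
    interval_cases l'
    have h1 : ((C 0 i).card : ℝ) ≤ N i := Nat.cast_le.2 (Finset.card_le_univ (C 0 i))
    nlinarith [hμnonneg 0, hNnonneg i]
  set g : ℕ → ℕ := fun i => Nat.findGreatest (P i) i with hgdef
  set B : ∀ i, Finset (X i) := fun i => C (g i) i with hBdef
  have hPg : ∀ i, P i (g i) := fun i => Nat.findGreatest_spec (Nat.zero_le i) (hP0 i)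
  -- the set where g i ≥ m is ω-large
  have hglarge : ∀ m : ℕ, {i | m ≤ g i} ∈ ω := by
    intro m
    have hPm : {i | P i m} ∈ ω := by
      have : ∀ l' : ℕ, {i | ((C l' i).card : ℝ) ≤ (μ l' + 1 / (l' + 1)) * N i} ∈ ω := by
        intro l'
        have hset : {i | ((C l' i).card : ℝ) / N i < μ l' + 1 / (l' + 1)} ∈ ω :=
          (hμlim l') (Iio_mem_nhds (by
            have : (0:ℝ) < 1 / (l' + 1) := by positivity
            linarith))
        filter_upwards [hset, hge 1] with i hi h1
        have hN := hNpos i h1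
        have := (div_lt_iff₀ hN).1 hi
        linarith
      have h2 : ∀ᶠ i in (ω : Filter ℕ), ∀ l' ∈ Finset.range (m + 1),
          ((C l' i).card : ℝ) ≤ (μ l' + 1 / (l' + 1)) * N i :=
        (Filter.eventually_all_finset _).2 (fun l' _ => this l')
      filter_upwards [h2] with i hi l' hl'
      exact hi l' (Finset.mem_range_succ_iff.2 hl')
    filter_upwards [hPm, hge m] with i hPi him
    exact Nat.le_findGreatest him hPi
  -- measure of B is t
  have hBlim : Filter.Tendsto (fun i => ((B i).card : ℝ) / N i) ω (nhds t) := by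
    rw [Metric.tendsto_nhds]
    intro ε hε
    obtain ⟨l₁, hl₁⟩ := exists_nat_one_div_lt hε
    obtain ⟨l₂, hl₂⟩ : ∃ l₂, t - ε < μ l₂ := by
      rcases (ht.eventually (eventually_gt_nhds (by linarith : t - ε < t))).exists with ⟨l₂, h⟩
      exact ⟨l₂, h⟩
    set l := max l₁ l₂ with hldef
    have hlow : {i | t - ε < ((C l i).card : ℝ) / N i} ∈ ω :=
      (hμlim l) (Ioi_mem_nhds (lt_of_lt_of_le hl₂ (hμmono (le_max_right _ _))))
    filter_upwards [hlow, hglarge l, hge 1] with i hlo hgl h1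
    have hN := hNpos i h1
    have hup : ((B i).card : ℝ) / N i < t + ε := by
      have h2 : ((C (g i) i).card : ℝ) ≤ (μ (g i) + 1 / (g i + 1)) * N i :=
        hPg i (g i) le_rfl
      have h3 : (1 : ℝ) / (g i + 1) ≤ 1 / (l + 1) := by
        apply one_div_le_one_div_of_le
        · positivity
        · exact_mod_cast Nat.add_le_add_right hgl 1
      have h4 : (1 : ℝ) / (l + 1) ≤ 1 / (l₁ + 1) := by
        apply one_div_le_one_div_of_le
        · positivity
        · exact_mod_cast Nat.add_le_add_right (le_max_left l₁ l₂ : l₁ ≤ l) 1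
      have h5 : ((B i).card : ℝ) / N i ≤ μ (g i) + 1 / (g i + 1) := by
        rw [div_le_iff₀ hN]
        exact h2
      calc ((B i).card : ℝ) / N i ≤ μ (g i) + 1 / (g i + 1) := h5
        _ ≤ t + 1 / (l₁ + 1) := add_le_add (hμle _) (h3.trans h4)
        _ < t + ε := by linarith
    have hlow' : t - ε < ((B i).card : ℝ) / N i := by
      refine lt_of_lt_of_le hlo ?_
      exact (div_le_div_iff_of_pos_right hN).2
        (Nat.cast_le.2 (Finset.card_le_card (hCmono hgl i)))
    rw [Real.dist_eq, abs_lt]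
    constructor <;> linarith
  refine ⟨B, ?_, ?_⟩
  · exact hBlim.limUnder_eq
  · intro m
    intro x hx
    induction x using Quotient.ind with
    | _ p =>
      have hxm : {i | p i ∈ A m i} ∈ ω := hx
      have hsub : {i | A m i ⊆ B i} ∈ ω := by
        filter_upwards [hglarge m] with i hi
        exact (hAC m i).trans (hCmono hi i)
      show {i | p i ∈ B i} ∈ ω
      filter_upwards [hxm, hsub] with i h1 h2
      exact h2 h1
end

section
/- Let f_i : X_i → [-d,d] be uniformly bounded functions on finite sets and let f : X → [-d,d] be their ultraproduct function, f([(p_i)]) = lim_ω f_i(p_i). Then f is measurable with respect to the Loeb σ-algebra on X, and ∫_X f dμ = lim_ω ( Σ_{p ∈ X_i} f_i(p) / |X_i| ). -/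
open Filter Set MeasureTheory

/-- A set `N ⊆ X` in the ultraproduct is a *nullset* if for every `ε > 0` it is covered by
an internal set of measure at most `ε`. -/
def IsNull (X : ℕ → Type) [∀ i, Fintype (X i)] (ω : Ultrafilter ℕ)
    (N : Set (UProd X ω)) : Prop :=
  ∀ ε : ℝ, 0 < ε → ∃ A : ∀ i, Finset (X i),
    N ⊆ internalSet X ω A ∧ intMeasure X ω A ≤ ε

/-- The Loeb σ-algebra on the ultraproduct: the σ-algebra generated by the sets that agree
with an internal set up to a nullset (by the Loeb construction, this collection is itself
a σ-algebra). -/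
def loebSpace (X : ℕ → Type) [∀ i, Fintype (X i)] (ω : Ultrafilter ℕ) :
    MeasurableSpace (UProd X ω) :=
  MeasurableSpace.generateFrom
    {B | ∃ A : ∀ i, Finset (X i), IsNull X ω (symmDiff B (internalSet X ω A))}

/-- A measure on the Loeb σ-algebra is a *Loeb measure* if it is a probability measure
assigning to every internal set `[{Aᵢ}]` the value `lim_ω |Aᵢ|/|Xᵢ|`. -/
def IsLoebMeasure (X : ℕ → Type) [∀ i, Fintype (X i)] (ω : Ultrafilter ℕ)
    (ν : @MeasureTheory.Measure (UProd X ω) (loebSpace X ω)) : Prop :=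
  @MeasureTheory.IsProbabilityMeasure (UProd X ω) (loebSpace X ω) ν ∧
  ∀ A : ∀ i, Finset (X i), ν (internalSet X ω A) = ENNReal.ofReal (intMeasure X ω A)

/-- The ultraproduct of a uniformly bounded family of functions `fᵢ : Xᵢ → ℝ`:
`f([(pᵢ)]) = lim_ω fᵢ(pᵢ)`. -/
noncomputable def uprodFun (X : ℕ → Type) (ω : Ultrafilter ℕ)
    (f : ∀ i, X i → ℝ) : UProd X ω → ℝ :=
  Quotient.lift (fun p => ulim ω (fun i => f i (p i))) (by
    intro p q h
    have he : (fun i => f i (p i)) =ᶠ[(ω : Filter ℕ)] (fun i => f i (q i)) :=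
      Filter.mem_of_superset h (fun i hi => congrArg (f i) hi)
    show lim (Filter.map (fun i => f i (p i)) (ω : Filter ℕ)) =
      lim (Filter.map (fun i => f i (q i)) (ω : Filter ℕ))
    rw [Filter.map_congr he])

open Topology

namespace UPAux

lemma tendsto_ulim (ω : Ultrafilter ℕ) {a : ℕ → ℝ} {m M : ℝ} (h : ∀ i, a i ∈ Icc m M) :
    Tendsto a ω (𝓝 (ulim ω a)) := by
  have hle : (ω.map a : Filter ℝ) ≤ 𝓟 (Icc m M) := by
    rw [Filter.le_principal_iff]
    exact Filter.mem_map.mpr (Filter.univ_mem' h)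
  obtain ⟨x, -, hx⟩ := isCompact_Icc.ultrafilter_le_nhds (ω.map a) hle
  exact tendsto_nhds_limUnder ⟨x, hx⟩

lemma ulim_const (ω : Ultrafilter ℕ) (c : ℝ) : ulim ω (fun _ => c) = c :=
  Filter.Tendsto.limUnder_eq tendsto_const_nhds

lemma mem_internal (X : ℕ → Type) (ω : Ultrafilter ℕ) (A : ∀ i, Finset (X i)) (p : ∀ i, X i) :
    (Quotient.mk (upSetoid X ω) p : UProd X ω) ∈ internalSet X ω A ↔ {i | p i ∈ A i} ∈ ω :=
  Iff.rfl

lemma uprodFun_mk (X : ℕ → Type) (ω : Ultrafilter ℕ) (f : ∀ i, X i → ℝ) (p : ∀ i, X i) :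
    uprodFun X ω f (Quotient.mk (upSetoid X ω) p) = ulim ω (fun i => f i (p i)) := rfl

lemma measurableSet_internal (X : ℕ → Type) [∀ i, Fintype (X i)] (ω : Ultrafilter ℕ)
    (A : ∀ i, Finset (X i)) : MeasurableSet[loebSpace X ω] (internalSet X ω A) := by
  apply MeasurableSpace.measurableSet_generateFrom
  refine ⟨A, fun ε hε => ⟨fun _ => ∅, ?_, ?_⟩⟩
  · rw [symmDiff_self]
    intro x hx
    exact absurd hx (by simp [Set.bot_eq_empty])
  · have : intMeasure X ω (fun _ => (∅ : Finset _)) = 0 := by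
      have h0 : (fun i => ((∅ : Finset (X i)).card : ℝ) / (Fintype.card (X i) : ℝ)) =
          fun _ => (0 : ℝ) := by funext i; simp
      rw [intMeasure, h0, ulim_const]
    linarith [this]

end UPAux

lemma sandwich {d t L : ℝ} (ht : 0 < t) {N : ℕ} (hN : (N : ℝ) * t = 2 * d)
    (hL1 : -d ≤ L) (hL2 : L ≤ d) (c : ℕ → ℝ)
    (hc0 : ∀ k : ℕ, c k = 0 ∨ c k = 1)
    (hlb : ∀ k : ℕ, c k = 1 → -d + (k : ℝ) * t ≤ L)
    (hub : ∀ k : ℕ, -d + (k : ℝ) * t < L → c k = 1) :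
    -d + t * (∑ k ∈ Finset.Icc 1 N, c k) ≤ L ∧
      L ≤ -d + t * (∑ k ∈ Finset.Icc 1 N, c k) + t := by
  classical
  set s : ℝ := (L + d) / t with hs
  have hs0 : 0 ≤ s := div_nonneg (by linarith) ht.le
  have hsN : s ≤ N := by
    rw [hs, div_le_iff₀ ht]
    linarith
  have hts : t * s = L + d := by rw [hs]; field_simp
  constructor
  · -- lower bound: t * Σ ≤ L + d
    have h1 : ∑ k ∈ Finset.Icc 1 N, c k ≤
        ∑ k ∈ Finset.Icc 1 N, (if (k : ℝ) ≤ s then (1 : ℝ) else 0) := by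
      refine Finset.sum_le_sum fun k _ => ?_
      rcases hc0 k with h | h
      · rw [h]; positivity
      · rw [h]
        have hk : (k : ℝ) ≤ s := by
          rw [hs, le_div_iff₀ ht]
          have := hlb k h
          linarith
        simp [hk]
    have h2 : (∑ k ∈ Finset.Icc 1 N, (if (k : ℝ) ≤ s then (1 : ℝ) else 0)) =
        (((Finset.Icc 1 N).filter (fun k : ℕ => (k : ℝ) ≤ s)).card : ℝ) :=
      Finset.sum_boole _ _
    have h3 : (Finset.Icc 1 N).filter (fun k : ℕ => (k : ℝ) ≤ s) ⊆ Finset.Icc 1 ⌊s⌋₊ := by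
      intro k hk
      simp only [Finset.mem_filter, Finset.mem_Icc] at hk ⊢
      exact ⟨hk.1.1, Nat.le_floor hk.2⟩
    have h4 : ((((Finset.Icc 1 N).filter (fun k : ℕ => (k : ℝ) ≤ s)).card : ℝ)) ≤ s := by
      calc ((((Finset.Icc 1 N).filter (fun k : ℕ => (k : ℝ) ≤ s)).card : ℝ))
          ≤ ((Finset.Icc 1 ⌊s⌋₊).card : ℝ) := by exact_mod_cast Finset.card_le_card h3
        _ = (⌊s⌋₊ : ℝ) := by rw [Nat.card_Icc]; simp
        _ ≤ s := Nat.floor_le hs0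
    have h5 : t * (∑ k ∈ Finset.Icc 1 N, c k) ≤ t * s := by
      apply mul_le_mul_of_nonneg_left _ ht.le
      rw [h2] at h1
      exact h1.trans h4
    linarith
  · -- upper bound: L + d - t ≤ t * Σ
    have h1 : (∑ k ∈ Finset.Icc 1 N, (if (k : ℝ) < s then (1 : ℝ) else 0)) ≤
        ∑ k ∈ Finset.Icc 1 N, c k := by
      refine Finset.sum_le_sum fun k _ => ?_
      by_cases hk : (k : ℝ) < s
      · have hck : c k = 1 := by
          apply hub
          rw [hs, lt_div_iff₀ ht] at hk
          linarith
        simp [hk, hck]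
      · simp only [hk, if_false]
        rcases hc0 k with h | h <;> simp [h]
    have h2 : (∑ k ∈ Finset.Icc 1 N, (if (k : ℝ) < s then (1 : ℝ) else 0)) =
        (((Finset.Icc 1 N).filter (fun k : ℕ => (k : ℝ) < s)).card : ℝ) :=
      Finset.sum_boole _ _
    have h3 : Finset.Icc 1 (min N (⌈s⌉₊ - 1)) ⊆
        (Finset.Icc 1 N).filter (fun k : ℕ => (k : ℝ) < s) := by
      intro k hk
      simp only [Finset.mem_Icc, le_min_iff] at hk
      simp only [Finset.mem_filter, Finset.mem_Icc]
      refine ⟨⟨hk.1, hk.2.1⟩, Nat.lt_ceil.mp (by omega)⟩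
    have h4 : s - 1 ≤ ((((Finset.Icc 1 N).filter (fun k : ℕ => (k : ℝ) < s)).card : ℝ)) := by
      have hcard : (Finset.Icc 1 (min N (⌈s⌉₊ - 1))).card = min N (⌈s⌉₊ - 1) := by
        rw [Nat.card_Icc]; omega
      have hle : min N (⌈s⌉₊ - 1) ≤
          ((Finset.Icc 1 N).filter (fun k : ℕ => (k : ℝ) < s)).card := by
        rw [← hcard]; exact Finset.card_le_card h3
      have hmin : s - 1 ≤ ((min N (⌈s⌉₊ - 1) : ℕ) : ℝ) := by
        rcases le_or_gt s 1 with h | h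
        · have : (0:ℝ) ≤ ((min N (⌈s⌉₊ - 1) : ℕ) : ℝ) := Nat.cast_nonneg _
          linarith
        · have hceil : 2 ≤ ⌈s⌉₊ := by
            have h1' : (1:ℝ) < (⌈s⌉₊ : ℝ) := lt_of_lt_of_le h (Nat.le_ceil s)
            exact_mod_cast h1'
          have hN' : s - 1 ≤ (N : ℝ) := by linarith
          have hc' : s - 1 ≤ ((⌈s⌉₊ - 1 : ℕ) : ℝ) := by
            have h1' : ((⌈s⌉₊ - 1 : ℕ) : ℝ) = (⌈s⌉₊ : ℝ) - 1 := by
              have : 1 ≤ ⌈s⌉₊ := by omega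
              push_cast [this]; ring
            have h2' : s ≤ (⌈s⌉₊ : ℝ) := Nat.le_ceil s
            linarith
          rcases le_total N (⌈s⌉₊ - 1) with hm | hm
          · rw [min_eq_left hm]; exact hN'
          · rw [min_eq_right hm]; exact hc'
      calc s - 1 ≤ ((min N (⌈s⌉₊ - 1) : ℕ) : ℝ) := hmin
        _ ≤ _ := by exact_mod_cast hle
    have h5 : t * (s - 1) ≤ t * (∑ k ∈ Finset.Icc 1 N, c k) := by
      apply mul_le_mul_of_nonneg_left _ ht.le
      rw [h2] at h1
      exact h4.trans h1
    nlinarith [h5, hts]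
open Filter Set MeasureTheory Topology UPAux

lemma measurable_uprodFun (X : ℕ → Type) [∀ i, Fintype (X i)] (ω : Ultrafilter ℕ)
    (f : ∀ i, X i → ℝ) (d : ℝ) (hf : ∀ i p, f i p ∈ Set.Icc (-d) d) :
    Measurable[loebSpace X ω] (uprodFun X ω f) := by
  classical
  apply measurable_of_Ici
  intro r
  have hkey : (uprodFun X ω f) ⁻¹' (Ici r) =
      ⋂ n : ℕ, internalSet X ω
        (fun i => Finset.univ.filter (fun p => r - 1/(n+1) ≤ f i p)) := by
    ext x
    simp only [Set.mem_preimage, Set.mem_Ici, Set.mem_iInter]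
    refine Quotient.inductionOn x (fun p => ?_)
    have htp : Tendsto (fun i => f i (p i)) ω (𝓝 (ulim ω (fun i => f i (p i)))) :=
      tendsto_ulim ω (fun i => hf i (p i))
    simp only [uprodFun_mk,
      mem_internal]
    constructor
    · intro hr n
      have hlt : r - 1/(n+1 : ℝ) < ulim ω (fun i => f i (p i)) := by
        have : (0:ℝ) < 1/(n+1 : ℝ) := by positivity
        linarith
      have hev : ∀ᶠ i in (ω : Filter ℕ), r - 1/(n+1 : ℝ) < f i (p i) :=
        htp (Ioi_mem_nhds hlt)
      refine Filter.mem_of_superset hev (fun i hi => ?_)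
      simp only [Set.mem_setOf_eq, Finset.mem_filter, Finset.mem_univ, true_and]
      exact le_of_lt hi
    · intro h
      have hn : ∀ n : ℕ, r - 1/(n+1 : ℝ) ≤ ulim ω (fun i => f i (p i)) := by
        intro n
        refine ge_of_tendsto htp ?_
        refine Filter.mem_of_superset (h n) (fun i hi => ?_)
        simp only [Set.mem_setOf_eq, Finset.mem_filter, Finset.mem_univ, true_and] at hi
        exact hi
      have htr : Tendsto (fun n : ℕ => r - 1/(n+1 : ℝ)) atTop (𝓝 r) := by
        have h1 : Tendsto (fun n : ℕ => 1/((n:ℝ)+1)) atTop (𝓝 0) :=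
          tendsto_one_div_add_atTop_nhds_zero_nat
        have h2 := Filter.Tendsto.sub (tendsto_const_nhds (x := r) (f := (atTop : Filter ℕ))) h1
        simpa using h2
      exact le_of_tendsto htr (Filter.Eventually.of_forall hn)
  rw [hkey]
  exact MeasurableSet.iInter fun n => measurableSet_internal X ω _

lemma key_estimate (X : ℕ → Type) [∀ i, Fintype (X i)] (ω : Ultrafilter ℕ)
    (d : ℝ) (hd : 0 < d) (f : ∀ i, X i → ℝ) (hf : ∀ i p, f i p ∈ Set.Icc (-d) d)
    (hne : ∀ i, Nonempty (X i))
    (ν : @MeasureTheory.Measure (UProd X ω) (loebSpace X ω))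
    (hν : IsLoebMeasure X ω ν)
    (hmeasf : Measurable[loebSpace X ω] (uprodFun X ω f))
    (N : ℕ) (hN : 0 < N) :
    |(∫ x, uprodFun X ω f x ∂ν) -
      ulim ω (fun i => (∑ p : X i, f i p) / (Fintype.card (X i) : ℝ))| ≤ 2 * d / N := by
  classical
  letI : MeasurableSpace (UProd X ω) := loebSpace X ω
  haveI : IsProbabilityMeasure ν := hν.1
  have hcard : ∀ i, 0 < (Fintype.card (X i) : ℝ) := fun i => by
    haveI := hne i
    exact_mod_cast Fintype.card_pos
  have hNR : (0:ℝ) < (N : ℝ) := by exact_mod_cast hN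
  set t : ℝ := 2 * d / N with htdef
  have ht : 0 < t := by positivity
  have htN : (N : ℝ) * t = 2 * d := by rw [htdef]; field_simp
  set A : ℕ → ∀ i, Finset (X i) :=
    fun k i => Finset.univ.filter (fun p => -d + (k:ℝ) * t ≤ f i p) with hA
  have hAmem : ∀ (k : ℕ) (i : ℕ) (p : X i), p ∈ A k i ↔ -d + (k:ℝ) * t ≤ f i p := by
    intro k i p; simp [hA]
  -- ratios and their limits
  have hratio : ∀ (k i : ℕ),
      ((A k i).card : ℝ) / (Fintype.card (X i) : ℝ) ∈ Icc (0:ℝ) 1 := by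
    intro k i
    constructor
    · positivity
    · rw [div_le_one (hcard i)]
      exact_mod_cast Finset.card_le_univ _
  set m : ℕ → ℝ := fun k => intMeasure X ω (A k) with hm
  have htm : ∀ k, Tendsto (fun i => ((A k i).card : ℝ) / (Fintype.card (X i) : ℝ))
      ω (𝓝 (m k)) := fun k => tendsto_ulim ω (fun i => hratio k i)
  have hm01 : ∀ k, m k ∈ Icc (0:ℝ) 1 := by
    intro k
    constructor
    · exact ge_of_tendsto (htm k) (Filter.Eventually.of_forall fun i => (hratio k i).1)
    · exact le_of_tendsto (htm k) (Filter.Eventually.of_forall fun i => (hratio k i).2)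
  -- sequences
  set a : ℕ → ℝ := fun i => (∑ p : X i, f i p) / (Fintype.card (X i) : ℝ) with ha
  set b : ℕ → ℝ := fun i =>
    -d + t * ∑ k ∈ Finset.Icc 1 N, ((A k i).card : ℝ) / (Fintype.card (X i) : ℝ) with hb
  -- pointwise sandwich on each X i
  have hpt : ∀ (i : ℕ) (p : X i),
      -d + t * (∑ k ∈ Finset.Icc 1 N, (if p ∈ A k i then (1:ℝ) else 0)) ≤ f i p ∧
      f i p ≤ -d + t * (∑ k ∈ Finset.Icc 1 N, (if p ∈ A k i then (1:ℝ) else 0)) + t := by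
    intro i p
    refine sandwich ht htN (hf i p).1 (hf i p).2 _ ?_ ?_ ?_
    · intro k; by_cases h : p ∈ A k i <;> simp [h]
    · intro k hk
      by_cases h : p ∈ A k i
      · exact (hAmem k i p).1 h
      · simp [h] at hk
    · intro k hk
      have h : p ∈ A k i := (hAmem k i p).2 hk.le
      simp [h]
  have hcount : ∀ (i k : ℕ), (∑ p : X i, (if p ∈ A k i then (1:ℝ) else 0)) =
      ((A k i).card : ℝ) := by
    intro i k
    rw [Finset.sum_boole]
    congr 1
    exact congrArg Finset.card (Finset.filter_univ_mem _)
  have hsum : ∀ i : ℕ, (∑ p : X i,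
      (-d + t * (∑ k ∈ Finset.Icc 1 N, (if p ∈ A k i then (1:ℝ) else 0)))) =
      (Fintype.card (X i) : ℝ) * b i := by
    intro i
    rw [Finset.sum_add_distrib, Finset.sum_const, Finset.card_univ, ← Finset.mul_sum,
      Finset.sum_comm]
    have h1 : ∀ k ∈ Finset.Icc 1 N, (∑ p : X i, (if p ∈ A k i then (1:ℝ) else 0)) =
        ((A k i).card : ℝ) := fun k _ => hcount i k
    rw [Finset.sum_congr rfl h1, hb]
    rw [nsmul_eq_mul]
    beta_reduce
    rw [← Finset.sum_div]
    have hc0 : (Fintype.card (X i) : ℝ) ≠ 0 := ne_of_gt (hcard i)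
    field_simp
  have hab : ∀ i, b i ≤ a i ∧ a i ≤ b i + t := by
    intro i
    have h1 : (Fintype.card (X i) : ℝ) * b i ≤ ∑ p : X i, f i p := by
      rw [← hsum i]
      exact Finset.sum_le_sum fun p _ => (hpt i p).1
    have h2 : ∑ p : X i, f i p ≤ (Fintype.card (X i) : ℝ) * b i +
        (Fintype.card (X i) : ℝ) * t := by
      have := Finset.sum_le_sum (fun p (_ : p ∈ Finset.univ) => (hpt i p).2)
      rw [Finset.sum_add_distrib, hsum i, Finset.sum_const, Finset.card_univ] at this
      simpa [nsmul_eq_mul] using this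
    constructor
    · rw [ha, le_div_iff₀ (hcard i)]
      linarith
    · rw [ha, div_le_iff₀ (hcard i)]
      ring_nf
      ring_nf at h2
      linarith
  have habd : ∀ i, a i ∈ Icc (-d) d := by
    intro i
    have h1 : (Fintype.card (X i) : ℝ) * (-d) ≤ ∑ p : X i, f i p := by
      calc (Fintype.card (X i) : ℝ) * (-d) = ∑ _p : X i, (-d) := by
            rw [Finset.sum_const, Finset.card_univ, nsmul_eq_mul]
        _ ≤ ∑ p : X i, f i p := Finset.sum_le_sum fun p _ => (hf i p).1
    have h2 : ∑ p : X i, f i p ≤ (Fintype.card (X i) : ℝ) * d := by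
      calc (∑ p : X i, f i p) ≤ ∑ _p : X i, d := Finset.sum_le_sum fun p _ => (hf i p).2
        _ = (Fintype.card (X i) : ℝ) * d := by
            rw [Finset.sum_const, Finset.card_univ, nsmul_eq_mul]
    constructor
    · rw [ha, le_div_iff₀ (hcard i)]; linarith
    · rw [ha, div_le_iff₀ (hcard i)]; linarith
  have hta : Tendsto a ω (𝓝 (ulim ω a)) := tendsto_ulim ω habd
  have htb : Tendsto b ω (𝓝 (-d + t * ∑ k ∈ Finset.Icc 1 N, m k)) := by
    apply Filter.Tendsto.const_add
    exact Filter.Tendsto.const_mul t (tendsto_finset_sum _ fun k _ => htm k)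
  set Lb : ℝ := -d + t * ∑ k ∈ Finset.Icc 1 N, m k with hLb
  have hUa1 : Lb ≤ ulim ω a :=
    le_of_tendsto_of_tendsto' htb hta (fun i => (hab i).1)
  have hUa2 : ulim ω a ≤ Lb + t := by
    have h' : Tendsto (fun i => b i + t) ω (𝓝 (Lb + t)) := htb.add_const t
    exact le_of_tendsto_of_tendsto' hta h' (fun i => (hab i).2)
  -- integral side
  set F : UProd X ω → ℝ := uprodFun X ω f with hF
  have hFbd : ∀ x, F x ∈ Icc (-d) d := by
    intro x
    refine Quotient.inductionOn x (fun p => ?_)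
    have htp : Tendsto (fun i => f i (p i)) ω (𝓝 (ulim ω (fun i => f i (p i)))) :=
      tendsto_ulim ω (fun i => hf i (p i))
    rw [hF]
    rw [show uprodFun X ω f (Quotient.mk (upSetoid X ω) p) =
      ulim ω (fun i => f i (p i)) from rfl]
    constructor
    · exact ge_of_tendsto htp (Filter.Eventually.of_forall fun i => (hf i (p i)).1)
    · exact le_of_tendsto htp (Filter.Eventually.of_forall fun i => (hf i (p i)).2)
  have hFint : Integrable F ν := by
    refine Integrable.mono' (integrable_const d) hmeasf.aestronglyMeasurable ?_
    refine Filter.Eventually.of_forall fun x => ?_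
    rw [Real.norm_eq_abs, abs_le]
    exact ⟨(hFbd x).1, (hFbd x).2⟩
  set B : ℕ → Set (UProd X ω) := fun k => internalSet X ω (A k) with hB
  have hBmeas : ∀ k, MeasurableSet (B k) := fun k => measurableSet_internal X ω (A k)
  have hνB : ∀ k, (ν (B k)).toReal = m k := by
    intro k
    rw [hB, hν.2 (A k), ENNReal.toReal_ofReal (hm01 k).1]
  set H : UProd X ω → ℝ := fun x =>
    -d + t * ∑ k ∈ Finset.Icc 1 N, (B k).indicator (fun _ => (1:ℝ)) x with hH
  have hHF : ∀ x, H x ≤ F x ∧ F x ≤ H x + t := by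
    intro x
    refine Quotient.inductionOn x (fun p => ?_)
    have htp : Tendsto (fun i => f i (p i)) ω (𝓝 (ulim ω (fun i => f i (p i)))) :=
      tendsto_ulim ω (fun i => hf i (p i))
    have hFp : F (Quotient.mk (upSetoid X ω) p) = ulim ω (fun i => f i (p i)) := rfl
    have hHp : H (Quotient.mk (upSetoid X ω) p) = -d + t * ∑ k ∈ Finset.Icc 1 N,
        (B k).indicator (fun _ => (1:ℝ)) (Quotient.mk (upSetoid X ω) p) := rfl
    have hLbd := hFbd (Quotient.mk (upSetoid X ω) p)
    rw [hFp] at hLbd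
    rw [hFp, hHp]
    refine sandwich ht htN hLbd.1 hLbd.2 _ ?_ ?_ ?_
    · intro k
      by_cases h : (Quotient.mk (upSetoid X ω) p : UProd X ω) ∈ B k
      · right; exact Set.indicator_of_mem h _
      · left; exact Set.indicator_of_notMem h _
    · intro k hk
      have hxB : (Quotient.mk (upSetoid X ω) p : UProd X ω) ∈ B k := by
        by_contra h
        exact zero_ne_one ((Set.indicator_of_notMem h _).symm.trans hk)
      have hω : {i | p i ∈ A k i} ∈ ω := (mem_internal X ω (A k) p).1 hxB
      refine ge_of_tendsto htp ?_
      refine Filter.mem_of_superset hω (fun i hi => ?_)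
      exact (hAmem k i (p i)).1 hi
    · intro k hk
      have hev : ∀ᶠ i in (ω : Filter ℕ), -d + (k:ℝ) * t < f i (p i) :=
        htp (Ioi_mem_nhds hk)
      have hω : {i | p i ∈ A k i} ∈ ω := by
        refine Filter.mem_of_superset hev (fun i hi => ?_)
        exact (hAmem k i (p i)).2 (le_of_lt hi)
      exact Set.indicator_of_mem ((mem_internal X ω (A k) p).2 hω) _
  have hSint : Integrable
      (fun x => ∑ k ∈ Finset.Icc 1 N, (B k).indicator (fun _ => (1:ℝ)) x) ν :=
    integrable_finset_sum _ fun k _ => (integrable_const (1:ℝ)).indicator (hBmeas k)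
  have hHint : Integrable H ν := by
    rw [hH]
    exact (integrable_const (-d)).add (hSint.const_mul t)
  have hHI : ∫ x, H x ∂ν = Lb := by
    rw [hH]
    rw [integral_add (integrable_const _) (hSint.const_mul t), integral_const,
      integral_const_mul t _,
      integral_finset_sum _ (fun k _ => (integrable_const (1:ℝ)).indicator (hBmeas k))]
    have : ∀ k ∈ Finset.Icc 1 N,
        (∫ x, (B k).indicator (fun _ => (1:ℝ)) x ∂ν) = m k := by
      intro k _
      rw [integral_indicator_const (1:ℝ) (hBmeas k), measureReal_def, hνB k, smul_eq_mul, mul_one]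
    rw [Finset.sum_congr rfl this, hLb]
    simp [measure_univ]
  have hIF1 : Lb ≤ ∫ x, F x ∂ν := by
    rw [← hHI]
    exact integral_mono hHint hFint (fun x => (hHF x).1)
  have hIF2 : (∫ x, F x ∂ν) ≤ Lb + t := by
    have h1 : (∫ x, F x ∂ν) ≤ ∫ x, (H x + t) ∂ν :=
      integral_mono hFint (hHint.add (integrable_const t)) (fun x => (hHF x).2)
    rw [integral_add hHint (integrable_const t), integral_const, hHI] at h1
    simpa [measure_univ] using h1
  rw [abs_le]
  constructor <;> [skip; skip] <;>
    · simp only [htdef] at hUa1 hUa2 hIF1 hIF2 ⊢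
      linarith

lemma nonempty_of_loeb (X : ℕ → Type) [∀ i, Fintype (X i)] (ω : Ultrafilter ℕ)
    (hcard : StrictMono fun i => Fintype.card (X i))
    (ν : @MeasureTheory.Measure (UProd X ω) (loebSpace X ω))
    (hν : IsLoebMeasure X ω ν) : ∀ i, Nonempty (X i) := by
  intro i
  rcases Nat.eq_zero_or_pos i with rfl | hi
  · by_contra h
    rw [not_nonempty_iff] at h
    have hemp : IsEmpty (UProd X ω) :=
      ⟨fun x => Quotient.ind (motive := fun _ => False) (fun p => (h.false (p 0)).elim) x⟩
    haveI := hν.1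
    have h1 : ν Set.univ = 1 := measure_univ
    rw [Set.univ_eq_empty_iff.mpr hemp, measure_empty] at h1
    exact zero_ne_one h1
  · have hlt : Fintype.card (X 0) < Fintype.card (X i) := hcard hi
    exact Fintype.card_pos_iff.mp (by omega)

/-- The ultraproduct of uniformly bounded functions `fᵢ : Xᵢ → [-d,d]` is measurable for
the Loeb σ-algebra and its integral against the Loeb measure is the ultralimit of the
averages: `∫ f dμ = lim_ω (Σ_{p ∈ Xᵢ} fᵢ(p))/|Xᵢ|`. -/
theorem uprodFun_measurable_and_integral (X : ℕ → Type) [∀ i, Fintype (X i)]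
    (ω : Ultrafilter ℕ) (hω : (ω : Filter ℕ) ≤ Filter.cofinite)
    (hcard : StrictMono fun i => Fintype.card (X i))
    (d : ℝ) (f : ∀ i, X i → ℝ) (hf : ∀ i p, f i p ∈ Set.Icc (-d) d)
    (ν : @MeasureTheory.Measure (UProd X ω) (loebSpace X ω))
    (hν : IsLoebMeasure X ω ν) :
    Measurable[loebSpace X ω] (uprodFun X ω f) ∧
    ∫ x, uprodFun X ω f x ∂ν =
      ulim ω (fun i => (∑ p : X i, f i p) / (Fintype.card (X i) : ℝ)) := by
  classical
  have hmeasf : Measurable[loebSpace X ω] (uprodFun X ω f) :=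
    measurable_uprodFun X ω f d hf
  refine ⟨hmeasf, ?_⟩
  have hne : ∀ i, Nonempty (X i) := nonempty_of_loeb X ω hcard ν hν
  have hd0 : 0 ≤ d := by
    have h := hf 0 (hne 0).some
    rw [Set.mem_Icc] at h
    linarith [h.1, h.2]
  rcases hd0.eq_or_lt with hd | hd
  · -- d = 0 case: f is identically zero
    have hfz : ∀ i p, f i p = 0 := by
      intro i p
      have h := hf i p
      rw [Set.mem_Icc] at h
      rw [← hd] at h
      linarith [h.1, h.2]
    have hF0 : ∀ x, uprodFun X ω f x = 0 := by
      intro x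
      refine Quotient.inductionOn x (fun p => ?_)
      rw [uprodFun_mk]
      have : (fun i => f i (p i)) = fun _ => (0:ℝ) := funext fun i => hfz i (p i)
      rw [this, ulim_const]
    have hR : (fun i => (∑ p : X i, f i p) / (Fintype.card (X i) : ℝ)) =
        fun _ => (0:ℝ) := by
      funext i
      simp [hfz]
    rw [hR, ulim_const]
    simp [hF0]
  · -- d > 0 case
    set I : ℝ := ∫ x, uprodFun X ω f x ∂ν with hI
    set U : ℝ := ulim ω (fun i => (∑ p : X i, f i p) / (Fintype.card (X i) : ℝ)) with hU
    have hkey : ∀ N : ℕ, 0 < N → |I - U| ≤ 2 * d / N := fun N hN =>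
      key_estimate X ω d hd f hf hne ν hν hmeasf N hN
    have hlim : Tendsto (fun n : ℕ => 2 * d / (n : ℝ)) atTop (𝓝 0) :=
      tendsto_const_div_atTop_nhds_zero_nat (2 * d)
    have habs : |I - U| ≤ 0 := by
      refine ge_of_tendsto hlim ?_
      filter_upwards [Filter.eventually_ge_atTop 1] with n hn
      exact hkey n hn
    have : I - U = 0 := abs_eq_zero.mp (le_antisymm habs (abs_nonneg _))
    linarith
end

section
/- Every bounded Loeb-measurable function f : X → [-d,d] on the ultraproduct of finite sets is almost everywhere equal to an ultraproduct function, i.e., there exist functions f_i : X_i → [-d,d] with lim_ω f_i = f μ-almost everywhere. -/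
open Filter Set MeasureTheory

section LoebAux

open Classical Topology

set_option linter.unusedSectionVars false

variable {X : ℕ → Type} [∀ i, Fintype (X i)] {ω : Ultrafilter ℕ}

/-! ### Ultralimit toolkit -/

lemma tendsto_ulim {a : ℕ → ℝ} {M : ℝ} (h : ∀ i, |a i| ≤ M) :
    Tendsto a (ω : Filter ℕ) (𝓝 (ulim ω a)) := by
  have hmem : Set.Icc (-M) M ∈ Ultrafilter.map a ω := by
    refine Filter.mem_map.2 (Filter.univ_mem' fun i => ?_)
    exact abs_le.1 (h i)
  obtain ⟨x, -, hx⟩ := isCompact_Icc.ultrafilter_le_nhds (ω.map a)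
    (Filter.le_principal_iff.2 hmem)
  have ht : Tendsto a (ω : Filter ℕ) (𝓝 x) := hx
  rw [ulim, ht.limUnder_eq]; exact ht

lemma ulim_le {a : ℕ → ℝ} {M c : ℝ} (h : ∀ i, |a i| ≤ M)
    (hle : ∀ᶠ i in (ω : Filter ℕ), a i ≤ c) : ulim ω a ≤ c :=
  le_of_tendsto (tendsto_ulim h) hle

lemma le_ulim {a : ℕ → ℝ} {M c : ℝ} (h : ∀ i, |a i| ≤ M)
    (hle : ∀ᶠ i in (ω : Filter ℕ), c ≤ a i) : c ≤ ulim ω a :=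
  ge_of_tendsto (tendsto_ulim h) hle

lemma ulim_eventually_eq {a : ℕ → ℝ} {c : ℝ}
    (h : ∀ᶠ i in (ω : Filter ℕ), a i = c) : ulim ω a = c := by
  have ht : Tendsto a (ω : Filter ℕ) (𝓝 c) :=
    Tendsto.congr' (Filter.EventuallyEq.symm h) tendsto_const_nhds
  exact ht.limUnder_eq

lemma ulim_const (c : ℝ) : ulim ω (fun _ => c) = c :=
  ulim_eventually_eq (Filter.Eventually.of_forall fun _ => rfl)

/-! ### Densities -/

/-- The density of a finite subset. -/
noncomputable def den {α : Type} [Fintype α] (A : Finset α) : ℝ :=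
  (A.card : ℝ) / (Fintype.card α : ℝ)

lemma den_nonneg {α : Type} [Fintype α] (A : Finset α) : 0 ≤ den A :=
  div_nonneg (Nat.cast_nonneg _) (Nat.cast_nonneg _)

lemma den_le_one {α : Type} [Fintype α] (A : Finset α) : den A ≤ 1 := by
  rcases Nat.eq_zero_or_pos (Fintype.card α) with h | h
  · have hA : A = ∅ := by
      have := Finset.card_le_card (Finset.subset_univ A)
      simp [Finset.card_univ, h] at this
      exact this
    simp [den, hA]
  · rw [den, div_le_one (by exact_mod_cast h)]
    exact_mod_cast (Finset.card_univ (α := α)) ▸ Finset.card_le_card (Finset.subset_univ A)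

lemma abs_den_le_one {α : Type} [Fintype α] (A : Finset α) : |den A| ≤ 1 :=
  abs_le.2 ⟨by linarith [den_nonneg A], den_le_one A⟩

lemma den_mono {α : Type} [Fintype α] {A B : Finset α} (h : A ⊆ B) : den A ≤ den B := by
  unfold den
  rcases Nat.eq_zero_or_pos (Fintype.card α) with h0 | h0
  · simp [h0]
  · exact div_le_div_of_nonneg_right (by exact_mod_cast Finset.card_le_card h)
      (by positivity)

lemma intMeasure_eq_ulim_den (A : ∀ i, Finset (X i)) :
    intMeasure X ω A = ulim ω (fun i => den (A i)) := rfl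

lemma intMeasure_nonneg (A : ∀ i, Finset (X i)) : 0 ≤ intMeasure X ω A := by
  rw [intMeasure_eq_ulim_den]
  exact le_ulim (fun i => abs_den_le_one _)
    (Filter.Eventually.of_forall fun i => den_nonneg _)

lemma intMeasure_empty : intMeasure X ω (fun i => (∅ : Finset (X i))) = 0 := by
  rw [intMeasure_eq_ulim_den]
  have : (fun i => den (∅ : Finset (X i))) = fun _ => (0 : ℝ) := by
    funext i; simp [den]
  rw [this, ulim_const]

/-! ### Internal sets -/

lemma mem_internal {A : ∀ i, Finset (X i)} {p : ∀ i, X i} :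
    Quotient.mk (upSetoid X ω) p ∈ internalSet X ω A ↔ {i | p i ∈ A i} ∈ ω :=
  Iff.rfl

lemma internal_mono {A B : ∀ i, Finset (X i)} (h : ∀ i, A i ⊆ B i) :
    internalSet X ω A ⊆ internalSet X ω B := by
  intro x
  induction x using Quotient.inductionOn with
  | h p => exact fun hx => Filter.mem_of_superset hx (fun i hi => h i hi)

lemma internal_empty : internalSet X ω (fun i => (∅ : Finset (X i))) = ∅ := by
  ext x
  induction x using Quotient.inductionOn with
  | h p =>
    refine iff_of_false ?_ (fun h => h)
    intro hx
    have hx' : {i | p i ∈ (∅ : Finset (X i))} ∈ ω := hx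
    have : {i | p i ∈ (∅ : Finset (X i))} = (∅ : Set ℕ) := by ext i; simp
    rw [this] at hx'
    exact Filter.empty_notMem (ω : Filter ℕ) hx'

lemma internal_union (A B : ∀ i, Finset (X i)) :
    internalSet X ω (fun i => A i ∪ B i) = internalSet X ω A ∪ internalSet X ω B := by
  ext x
  induction x using Quotient.inductionOn with
  | h p =>
    have hset : {i | p i ∈ A i ∪ B i} = {i | p i ∈ A i} ∪ {i | p i ∈ B i} := by
      ext i; simp [Finset.mem_union]
    show {i | p i ∈ A i ∪ B i} ∈ ω ↔ _
    rw [hset, Ultrafilter.union_mem_iff]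
    rfl

lemma isNull_empty : IsNull X ω (∅ : Set (UProd X ω)) := by
  intro ε hε
  exact ⟨fun i => ∅, by simp, by rw [intMeasure_empty]; linarith⟩

lemma measurableSet_internal (A : ∀ i, Finset (X i)) :
    MeasurableSet[loebSpace X ω] (internalSet X ω A) :=
  MeasurableSpace.measurableSet_generateFrom
    ⟨A, by rw [symmDiff_self]; exact isNull_empty⟩


lemma ulim_mono {a b : ℕ → ℝ} {M M' : ℝ} (ha : ∀ i, |a i| ≤ M) (hb : ∀ i, |b i| ≤ M')
    (h : ∀ᶠ i in (ω : Filter ℕ), a i ≤ b i) : ulim ω a ≤ ulim ω b :=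
  le_of_tendsto_of_tendsto (tendsto_ulim ha) (tendsto_ulim hb) h

lemma internal_compl (A : ∀ i, Finset (X i)) :
    internalSet X ω (fun i => (A i)ᶜ) = (internalSet X ω A)ᶜ := by
  ext x
  induction x using Quotient.inductionOn with
  | h p =>
    show {i | p i ∈ (A i)ᶜ} ∈ ω ↔ ¬ {i | p i ∈ A i} ∈ ω
    have : {i | p i ∈ (A i)ᶜ} = {i | p i ∈ A i}ᶜ := by
      ext i; simp [Finset.mem_compl]
    rw [this, Ultrafilter.compl_mem_iff_notMem]

lemma nat_tail_mem (hω : (ω : Filter ℕ) ≤ Filter.cofinite) (n : ℕ) :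
    {i : ℕ | n ≤ i} ∈ ω := by
  apply hω
  rw [Filter.mem_cofinite]
  exact (Set.finite_Iio n).subset (fun i hi => by
    simp only [Set.mem_compl_iff, Set.mem_setOf_eq, not_le] at hi
    exact hi)

/-- The saturation lemma: a monotone sequence of internal sets of measure at most `s` is
contained in a single internal set of measure at most `s`. -/
lemma saturation (hω : (ω : Filter ℕ) ≤ Filter.cofinite)
    {D : ℕ → ∀ i, Finset (X i)} (hmono : ∀ m n, m ≤ n → ∀ i, D m i ⊆ D n i)
    {s : ℝ} (hs : 0 ≤ s) (hle : ∀ n, intMeasure X ω (D n) ≤ s) :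
    ∃ E : ∀ i, Finset (X i), (∀ n, internalSet X ω (D n) ⊆ internalSet X ω E) ∧
      intMeasure X ω E ≤ s := by
  classical
  set P : ℕ → ℕ → Prop := fun i k => den (D k i) ≤ s + 1 / (k + 1) with hP
  set K : ℕ → ℕ := fun i => Nat.findGreatest (P i) i with hK
  have hP0 : ∀ i, P i 0 := by
    intro i
    have : (1 : ℝ) / (0 + 1) = 1 := by norm_num
    simp only [hP, Nat.cast_zero, this]
    linarith [den_le_one (D 0 i)]
  have hspec : ∀ i, den (D (K i) i) ≤ s + 1 / (K i + 1) := fun i =>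
    Nat.findGreatest_spec (Nat.zero_le i) (hP0 i)
  have hKge : ∀ n, {i : ℕ | n ≤ K i} ∈ ω := by
    intro n
    have h1 : {i : ℕ | n ≤ i} ∈ ω := nat_tail_mem hω n
    have h2 : {i : ℕ | P i n} ∈ ω := by
      have ht : Tendsto (fun i => den (D n i)) (ω : Filter ℕ) (𝓝 (intMeasure X ω (D n))) :=
        tendsto_ulim (fun i => abs_den_le_one _)
      have hlt : intMeasure X ω (D n) < s + 1 / (n + 1) := by
        have : (0:ℝ) < 1 / (n + 1) := by positivity
        linarith [hle n]
      exact (ht.eventually_lt_const hlt).mono (fun i hi => le_of_lt hi)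
    refine Filter.mem_of_superset (Filter.inter_mem h1 h2) ?_
    rintro i ⟨hi1, hi2⟩
    exact Nat.le_findGreatest hi1 hi2
  refine ⟨fun i => D (K i) i, ?_, ?_⟩
  · intro n x
    induction x using Quotient.inductionOn with
    | h p =>
      intro hx
      have hx' : {i | p i ∈ D n i} ∈ ω := hx
      refine Filter.mem_of_superset (Filter.inter_mem hx' (hKge n)) ?_
      rintro i ⟨hi1, hi2⟩
      exact hmono n (K i) hi2 i hi1
  · refine le_of_forall_pos_le_add ?_
    intro ε hε
    obtain ⟨n, hn⟩ := exists_nat_one_div_lt hε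
    have hev : ∀ᶠ i in (ω : Filter ℕ), den (D (K i) i) ≤ s + ε := by
      have hev0 : ∀ᶠ i in (ω : Filter ℕ), n ≤ K i := hKge n
      refine hev0.mono (fun i hi => ?_)
      have h1 : (1:ℝ) / (K i + 1) ≤ 1 / (n + 1) := by
        apply div_le_div_of_nonneg_left (by norm_num) (by positivity)
        have : (n:ℝ) ≤ K i := by exact_mod_cast hi
        linarith
      calc den (D (K i) i) ≤ s + 1 / (K i + 1) := hspec i
        _ ≤ s + 1 / (n + 1) := by linarith
        _ ≤ s + ε := by linarith
    exact ulim_le (fun i => abs_den_le_one _) hev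

lemma meas_null_of_isNull {ν : @MeasureTheory.Measure (UProd X ω) (loebSpace X ω)}
    (hν : IsLoebMeasure X ω ν) {N : Set (UProd X ω)} (h : IsNull X ω N) : ν N = 0 := by
  have key : ∀ ε : ℝ, 0 < ε → ν N ≤ ENNReal.ofReal ε := by
    intro ε hε
    obtain ⟨A, hsub, hle⟩ := h ε hε
    calc ν N ≤ ν (internalSet X ω A) := measure_mono hsub
      _ = ENNReal.ofReal (intMeasure X ω A) := hν.2 A
      _ ≤ ENNReal.ofReal ε := ENNReal.ofReal_le_ofReal hle
  have h2 : Tendsto (fun n : ℕ => ENNReal.ofReal (1 / (n + 1))) atTop (𝓝 0) := by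
    rw [show (0 : ENNReal) = ENNReal.ofReal 0 by simp]
    exact (ENNReal.continuous_ofReal.tendsto 0).comp tendsto_one_div_add_atTop_nhds_zero_nat
  have := ge_of_tendsto h2 (Filter.Eventually.of_forall
    (fun n : ℕ => key (1 / (n + 1)) (by positivity)))
  exact le_antisymm this zero_le

/-- Structure theorem for the Loeb σ-algebra: every measurable set agrees with an
internal set up to a `ν`-nullset. -/
lemma exists_internal_ae (hω : (ω : Filter ℕ) ≤ Filter.cofinite)
    {ν : @MeasureTheory.Measure (UProd X ω) (loebSpace X ω)} (hν : IsLoebMeasure X ω ν)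
    {B : Set (UProd X ω)} (hB : MeasurableSet[loebSpace X ω] B) :
    ∃ A : ∀ i, Finset (X i), ν (symmDiff B (internalSet X ω A)) = 0 := by
  classical
  haveI hprob := hν.1
  letI m : MeasurableSpace (UProd X ω) := loebSpace X ω
  set C : Set (Set (UProd X ω)) :=
    {B | ∃ A : ∀ i, Finset (X i), IsNull X ω (symmDiff B (internalSet X ω A))} with hC
  have hB' : MeasurableSet[MeasurableSpace.generateFrom C] B := hB
  refine MeasurableSpace.generateFrom_induction C
    (fun t _ => ∃ A : ∀ i, Finset (X i), ν (symmDiff t (internalSet X ω A)) = 0)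
    ?_ ?_ ?_ ?_ B hB'
  · rintro t ⟨A, hA⟩ _
    exact ⟨A, meas_null_of_isNull hν hA⟩
  · refine ⟨fun i => ∅, ?_⟩
    rw [internal_empty, symmDiff_self]
    simpa using measure_empty (μ := ν)
  · rintro t _ ⟨A, hA⟩
    refine ⟨fun i => (A i)ᶜ, ?_⟩
    rw [internal_compl, compl_symmDiff_compl]
    exact hA
  · intro sfn hsm hp
    choose A hA using hp
    set D : ℕ → ∀ i, Finset (X i) := fun N i => (Finset.range (N + 1)).biUnion (fun n => A n i)
      with hD
    have hDmono : ∀ M N, M ≤ N → ∀ i, D M i ⊆ D N i := by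
      intro M N h i
      exact Finset.biUnion_subset_biUnion_of_subset_left _
        (Finset.range_subset_range.2 (Nat.add_le_add_right h 1))
    have hAD : ∀ n N, n ≤ N → internalSet X ω (A n) ⊆ internalSet X ω (D N) := by
      intro n N h
      refine internal_mono (fun i => ?_)
      exact Finset.subset_biUnion_of_mem (fun n => A n i)
        (Finset.mem_range.2 (Nat.lt_succ_of_le h))
    set U : Set (UProd X ω) := ⋃ n, internalSet X ω (A n) with hU
    have hDU : ∀ N, internalSet X ω (D N) ⊆ U := by
      intro N
      induction N with
      | zero =>
        have : D 0 = A 0 := by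
          funext i
          show (Finset.range 1).biUnion (fun n => A n i) = A 0 i
          rw [Finset.range_one, Finset.singleton_biUnion]
        rw [this]
        exact Set.subset_iUnion (fun n => internalSet X ω (A n)) 0
      | succ N ih =>
        have hstep : D (N + 1) = fun i => A (N + 1) i ∪ D N i := by
          funext i
          show (Finset.range (N + 2)).biUnion (fun n => A n i) = _
          rw [Finset.range_add_one, Finset.biUnion_insert]
        rw [hstep, internal_union]
        exact Set.union_subset (Set.subset_iUnion (fun n => internalSet X ω (A n)) (N + 1)) ih
    have hUD : U = ⋃ N, internalSet X ω (D N) := by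
      apply Set.Subset.antisymm
      · exact Set.iUnion_subset (fun n => (hAD n n le_rfl).trans
          (Set.subset_iUnion (fun N => internalSet X ω (D N)) n))
      · exact Set.iUnion_subset hDU
    -- the measures of the D N
    set sN : ℕ → ℝ := fun N => intMeasure X ω (D N) with hsN
    have hsN1 : ∀ N, sN N ≤ 1 :=
      fun N => ulim_le (fun i => abs_den_le_one _)
        (Filter.Eventually.of_forall (fun i => den_le_one _))
    have hsNmono : Monotone sN := by
      intro M N h
      exact ulim_mono (fun i => abs_den_le_one _) (fun i => abs_den_le_one _)
        (Filter.Eventually.of_forall (fun i => den_mono (hDmono M N h i)))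
    have hbdd : BddAbove (Set.range sN) := ⟨1, by rintro _ ⟨N, rfl⟩; exact hsN1 N⟩
    set sInf : ℝ := ⨆ N, sN N with hsInf
    have hsle : ∀ N, sN N ≤ sInf := fun N => le_ciSup hbdd N
    have hs0 : 0 ≤ sInf := le_trans (intMeasure_nonneg (D 0)) (hsle 0)
    obtain ⟨E, hEcov, hEle⟩ := saturation hω hDmono hs0 hsle
    -- ν U = ofReal sInf
    have hmeasD : ∀ N, MeasurableSet[m] (internalSet X ω (D N)) :=
      fun N => measurableSet_internal (D N)
    have hmonoD : Monotone (fun N => internalSet X ω (D N)) :=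
      fun M N h => internal_mono (hDmono M N h)
    have ht1 : Tendsto (fun N => ν (internalSet X ω (D N))) atTop (𝓝 (ν U)) := by
      rw [hUD]
      exact MeasureTheory.tendsto_measure_iUnion_atTop hmonoD
    have ht2 : Tendsto (fun N => ν (internalSet X ω (D N))) atTop
        (𝓝 (ENNReal.ofReal sInf)) := by
      have : (fun N => ν (internalSet X ω (D N))) = fun N => ENNReal.ofReal (sN N) := by
        funext N; exact hν.2 (D N)
      rw [this]
      exact (ENNReal.continuous_ofReal.tendsto sInf).comp (tendsto_atTop_ciSup hsNmono hbdd)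
    have hνU : ν U = ENNReal.ofReal sInf := tendsto_nhds_unique ht1 ht2
    have hUE : U ⊆ internalSet X ω E := by
      rw [hUD]
      exact Set.iUnion_subset hEcov
    have hUmeas : MeasurableSet[m] U := by
      rw [hUD]; exact MeasurableSet.iUnion hmeasD
    have hνEU : ν (internalSet X ω E \ U) = 0 := by
      rw [measure_diff hUE hUmeas.nullMeasurableSet (measure_ne_top ν U), hνU]
      refine tsub_eq_zero_of_le ?_
      rw [hν.2 E]
      exact ENNReal.ofReal_le_ofReal hEle
    refine ⟨E, ?_⟩
    have htri : symmDiff (⋃ n, sfn n) (internalSet X ω E) ⊆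
        symmDiff (⋃ n, sfn n) U ∪ symmDiff U (internalSet X ω E) :=
      symmDiff_triangle _ _ _
    have h1 : ν (symmDiff U (internalSet X ω E)) = 0 := by
      rw [symmDiff_of_le hUE]
      exact hνEU
    have h2 : ν (symmDiff (⋃ n, sfn n) U) = 0 := by
      have hsub : symmDiff (⋃ n, sfn n) U ⊆ ⋃ n, symmDiff (sfn n) (internalSet X ω (A n)) := by
        intro x hx
        rcases Set.mem_symmDiff.1 hx with ⟨hx1, hx2⟩ | ⟨hx1, hx2⟩
        · obtain ⟨n, hn⟩ := Set.mem_iUnion.1 hx1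
          refine Set.mem_iUnion.2 ⟨n, Set.mem_symmDiff.2 (Or.inl ⟨hn, fun hc => hx2 ?_⟩)⟩
          exact Set.mem_iUnion.2 ⟨n, hc⟩
        · obtain ⟨n, hn⟩ := Set.mem_iUnion.1 hx1
          refine Set.mem_iUnion.2 ⟨n, Set.mem_symmDiff.2 (Or.inr ⟨hn, fun hc => hx2 ?_⟩)⟩
          exact Set.mem_iUnion.2 ⟨n, hc⟩
      exact measure_mono_null hsub (measure_iUnion_null hA)
    refine le_antisymm ?_ zero_le
    calc ν (symmDiff (⋃ n, sfn n) (internalSet X ω E))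
        ≤ ν (symmDiff (⋃ n, sfn n) U ∪ symmDiff U (internalSet X ω E)) := measure_mono htri
      _ ≤ ν (symmDiff (⋃ n, sfn n) U) + ν (symmDiff U (internalSet X ω E)) := measure_union_le _ _
      _ = 0 := by rw [h1, h2]; simp

end LoebAux

open Topology in
/-- Every bounded Loeb-measurable function `f : X → [-d,d]` on the ultraproduct of finite
sets is almost everywhere (w.r.t. the Loeb measure) equal to an ultraproduct function:
there are functions `fᵢ : Xᵢ → [-d,d]` with `lim_ω fᵢ = f` μ-a.e. -/
theorem loeb_measurable_eq_uprodFun_ae (X : ℕ → Type) [∀ i, Fintype (X i)]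
    (ω : Ultrafilter ℕ) (hω : (ω : Filter ℕ) ≤ Filter.cofinite)
    (hcard : StrictMono fun i => Fintype.card (X i))
    (d : ℝ) (f : UProd X ω → ℝ) (hb : ∀ x, f x ∈ Set.Icc (-d) d)
    (hm : Measurable[loebSpace X ω] f)
    (ν : @MeasureTheory.Measure (UProd X ω) (loebSpace X ω))
    (hν : IsLoebMeasure X ω ν) :
    ∃ g : ∀ i, X i → ℝ, (∀ i p, g i p ∈ Set.Icc (-d) d) ∧
      ∀ᵐ x ∂ν, uprodFun X ω g x = f x := by
  classical
  haveI hprob := hν.1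
  -- the ultraproduct is nonempty, hence `0 ≤ d`
  have hne : Nonempty (UProd X ω) := by
    by_contra hcon
    rw [not_nonempty_iff] at hcon
    have h1 : ν Set.univ = 1 := measure_univ
    rw [Set.univ_eq_empty_iff.2 hcon] at h1
    simp at h1
  obtain ⟨x₀⟩ := hne
  have hd0 : 0 ≤ d := by
    have h := hb x₀
    simp only [Set.mem_Icc] at h
    linarith [h.1, h.2]
  rcases eq_or_lt_of_le hd0 with hdeq | hdpos
  · -- degenerate case `d = 0`
    refine ⟨fun i p => 0, fun i p => by simp [Set.mem_Icc, ← hdeq], ?_⟩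
    refine Filter.Eventually.of_forall (fun x => ?_)
    have hfx : f x = 0 := by
      have h := hb x
      simp only [Set.mem_Icc, ← hdeq] at h
      linarith [h.1, h.2]
    induction x using Quotient.inductionOn with
    | h p =>
      show ulim ω (fun i => (0 : ℝ)) = f _
      rw [ulim_const]
      exact hfx.symm
  -- main case `0 < d`
  set w : ℕ → ℝ := fun n => d / 2 ^ n with hw
  have hw0 : ∀ n, 0 < w n := fun n => by positivity
  have hwsucc : ∀ n, w (n + 1) = w n / 2 := by
    intro n
    show d / 2 ^ (n + 1) = d / 2 ^ n / 2
    rw [pow_succ, ← div_div]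
  set mc : ℕ → ℕ := fun n => 2 ^ (n + 1) with hmc
  have hmc1 : ∀ n, 1 ≤ mc n := fun n => Nat.one_le_two_pow
  set c : ℕ → ℕ → ℝ := fun n k => -d + k * w n with hc
  have hc0 : ∀ n, c n 0 = -d := fun n => by simp [hc]
  have hcsucc : ∀ n k, c n (k + 1) = c n k + w n := by
    intro n k
    show -d + (↑(k + 1) : ℝ) * w n = (-d + k * w n) + w n
    push_cast
    ring
  have hctop : ∀ n, c n (mc n) = d := by
    intro n
    show -d + ((2 ^ (n + 1) : ℕ) : ℝ) * (d / 2 ^ n) = d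
    push_cast
    rw [pow_succ]
    field_simp
    ring
  have hcge : ∀ n k, -d ≤ c n k := by
    intro n k
    have : (0 : ℝ) ≤ k * w n := mul_nonneg (Nat.cast_nonneg _) (hw0 n).le
    show -d ≤ -d + k * w n
    linarith
  have hcle : ∀ n k, k ≤ mc n → c n k ≤ d := by
    intro n k hk
    have h1 : (k : ℝ) * w n ≤ (mc n : ℝ) * w n := by
      apply mul_le_mul_of_nonneg_right _ (hw0 n).le
      exact_mod_cast hk
    have h2 : c n k ≤ c n (mc n) := by
      show -d + (k : ℝ) * w n ≤ -d + (mc n : ℝ) * w n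
      linarith
    rw [hctop n] at h2
    exact h2
  -- the level sets of `f` and their internal approximations
  set B : ℕ → ℕ → Set (UProd X ω) := fun n k => f ⁻¹' (Set.Icc (c n k) (c n (k + 1)))
    with hB
  have hBmeas : ∀ n k, MeasurableSet[loebSpace X ω] (B n k) :=
    fun n k => hm measurableSet_Icc
  have hAex : ∀ n k : ℕ, ∃ A : ∀ i, Finset (X i),
      ν (symmDiff (B n k) (internalSet X ω A)) = 0 :=
    fun n k => exists_internal_ae hω hν (hBmeas n k)
  choose A hA using hAex
  set Z₀ : Set (UProd X ω) := ⋃ n, ⋃ k, symmDiff (B n k) (internalSet X ω (A n k)) with hZ₀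
  have hZ₀null : ν Z₀ = 0 :=
    measure_iUnion_null (fun n => measure_iUnion_null (fun k => hA n k))
  -- the internal simple approximations
  set h : ℕ → ∀ i, X i → ℝ := fun n i q =>
    if hex : ∃ k, k < mc n ∧ q ∈ A n k i then c n (Nat.find hex) else -d with hh
  have hhbd : ∀ n i q, |h n i q| ≤ d := by
    intro n i q
    show |(if hex : ∃ k, k < mc n ∧ q ∈ A n k i then c n (Nat.find hex) else -d)| ≤ d
    split_ifs with hex
    · have h1 := (Nat.find_spec hex).1
      exact abs_le.2 ⟨hcge n _, hcle n _ h1.le⟩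
    · rw [abs_neg, abs_of_nonneg hd0]
  -- the key level approximation lemma
  have hlevel : ∀ n (p : ∀ i, X i), Quotient.mk (upSetoid X ω) p ∉ Z₀ →
      ∀ᶠ i in (ω : Filter ℕ), |h n i (p i) - f (Quotient.mk (upSetoid X ω) p)| ≤ w n := by
    intro n p hxZ
    set x := Quotient.mk (upSetoid X ω) p with hx
    have hgood : ∀ k, x ∈ B n k ↔ x ∈ internalSet X ω (A n k) := by
      intro k
      have : x ∉ symmDiff (B n k) (internalSet X ω (A n k)) := by
        intro hcon
        exact hxZ (Set.mem_iUnion.2 ⟨n, Set.mem_iUnion.2 ⟨k, hcon⟩⟩)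
      replace this : ¬ ((x ∈ B n k ∧ x ∉ internalSet X ω (A n k)) ∨ (x ∈ internalSet X ω (A n k) ∧ x ∉ B n k)) :=
        fun hh => this (Set.mem_symmDiff.2 hh)
      push_neg at this
      exact ⟨this.1, this.2⟩
    -- there is a `k` with `x ∈ B n k`
    have hexB : ∃ k, k < mc n ∧ x ∈ B n k := by
      set Q : ℕ → Prop := fun k => c n k ≤ f x with hQ
      have hQ0 : Q 0 := by
        rw [hQ]
        simp only [hc0]
        exact (hb x).1
      set kstar := Nat.findGreatest Q (mc n - 1) with hkstar
      have hkle : kstar ≤ mc n - 1 := Nat.findGreatest_le _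
      have hklt : kstar < mc n := lt_of_le_of_lt hkle (Nat.sub_lt (hmc1 n) one_pos)
      have hQk : Q kstar := Nat.findGreatest_spec (Nat.zero_le _) hQ0
      have hup : f x ≤ c n (kstar + 1) := by
        by_cases hk : kstar = mc n - 1
        · have : kstar + 1 = mc n := by omega
          rw [this, hctop]
          exact (hb x).2
        · have h1 : kstar + 1 ≤ mc n - 1 := by omega
          have h2 := Nat.findGreatest_is_greatest (Nat.lt_succ_self kstar) h1
          exact le_of_not_ge h2
      exact ⟨kstar, hklt, Set.mem_preimage.2 (Set.mem_Icc.2 ⟨hQk, hup⟩)⟩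
    have hexI : ∃ k, k < mc n ∧ x ∈ internalSet X ω (A n k) := by
      obtain ⟨k, hk1, hk2⟩ := hexB
      exact ⟨k, hk1, (hgood k).1 hk2⟩
    set κ := Nat.find hexI with hκ
    have hκspec := Nat.find_spec hexI
    -- the ω-large set of good indices
    have hT : ∀ k, k < mc n →
        {i : ℕ | p i ∈ A n k i ↔ x ∈ internalSet X ω (A n k)} ∈ ω := by
      intro k _
      by_cases hxk : x ∈ internalSet X ω (A n k)
      · have hmem : {i | p i ∈ A n k i} ∈ ω := hxk
        refine Filter.mem_of_superset hmem (fun i hi => ?_)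
        simp only [Set.mem_setOf_eq] at hi ⊢
        exact iff_of_true hi hxk
      · have hmem : {i | p i ∈ A n k i}ᶜ ∈ ω :=
          Ultrafilter.compl_mem_iff_notMem.2 hxk
        refine Filter.mem_of_superset hmem (fun i hi => ?_)
        simp only [Set.mem_compl_iff, Set.mem_setOf_eq] at hi ⊢
        exact iff_of_false hi hxk
    have hG : (⋂ k ∈ Finset.range (mc n),
        {i : ℕ | p i ∈ A n k i ↔ x ∈ internalSet X ω (A n k)}) ∈ ω :=
      (Filter.biInter_finset_mem _).2 (fun k hk => hT k (Finset.mem_range.1 hk))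
    refine Filter.mem_of_superset hG ?_
    intro i hi
    simp only [Set.mem_iInter] at hi
    have hiff : ∀ k, k < mc n → (p i ∈ A n k i ↔ x ∈ internalSet X ω (A n k)) :=
      fun k hk => hi k (Finset.mem_range.2 hk)
    -- compute `h n i (p i)`
    have hexi : ∃ k, k < mc n ∧ p i ∈ A n k i :=
      ⟨κ, hκspec.1, (hiff κ hκspec.1).2 hκspec.2⟩
    have hfind : Nat.find hexi = κ := by
      rw [Nat.find_eq_iff]
      refine ⟨⟨hκspec.1, (hiff κ hκspec.1).2 hκspec.2⟩, ?_⟩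
      intro j hj hcon
      exact Nat.find_min hexI hj ⟨hcon.1, (hiff j hcon.1).1 hcon.2⟩
    have hval : h n i (p i) = c n κ := by
      show (if hex : ∃ k, k < mc n ∧ p i ∈ A n k i then c n (Nat.find hex) else -d) = c n κ
      rw [dif_pos hexi, hfind]
    -- the approximation bound
    have hxB : x ∈ B n κ := (hgood κ).2 hκspec.2
    have hfI : c n κ ≤ f x ∧ f x ≤ c n (κ + 1) := Set.mem_Icc.1 (Set.mem_preimage.1 hxB)
    rw [Set.mem_setOf_eq, hval]
    have := hcsucc n κ
    rw [abs_le]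
    constructor <;> [linarith [hfI.2, hw0 n]; linarith [hfI.1, hw0 n]]
  -- the internal deviation sets
  set D : ℕ → ∀ i, Finset (X i) := fun n i =>
    Finset.univ.filter (fun q => 2 * w n < |h (n + 1) i q - h n i q|) with hD
  have hDsub : ∀ n, internalSet X ω (D n) ⊆ Z₀ := by
    intro n x hxD
    by_contra hxZ
    induction x using Quotient.inductionOn with
    | h p =>
      have h1 := hlevel n p hxZ
      have h2 := hlevel (n + 1) p hxZ
      have h3 : ∀ᶠ i in (ω : Filter ℕ), p i ∈ D n i := hxD
      obtain ⟨i, ⟨hi1, hi2⟩, hi3⟩ := ((h1.and h2).and h3).exists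
      have hDi : 2 * w n < |h (n + 1) i (p i) - h n i (p i)| := by
        have := Finset.mem_filter.1 hi3
        exact this.2
      have hcomb : |h (n + 1) i (p i) - h n i (p i)| ≤ w n + w (n + 1) := by
        have h4 := abs_sub_le (h (n + 1) i (p i)) (f (Quotient.mk (upSetoid X ω) p))
          (h n i (p i))
        rw [abs_sub_comm (f (Quotient.mk (upSetoid X ω) p)) (h n i (p i))] at h4
        linarith
      rw [hwsucc n] at hcomb
      linarith [hw0 n]
  have hDnull : ∀ n, ν (internalSet X ω (D n)) = 0 :=
    fun n => measure_mono_null (hDsub n) hZ₀null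
  -- the diagonal function
  set g : ∀ i, X i → ℝ := fun i q =>
    h (Nat.findGreatest (fun n => ∀ l, l < n → q ∉ D l i) i) i q with hg
  have hgbd : ∀ i q, |g i q| ≤ d := fun i q => hhbd _ i q
  refine ⟨g, fun i q => Set.mem_Icc.2 (abs_le.1 (hgbd i q)), ?_⟩
  -- the full bad set
  set Zbad : Set (UProd X ω) := Z₀ ∪ ⋃ n, internalSet X ω (D n) with hZbad
  have hZbadnull : ν Zbad = 0 := by
    rw [hZbad]
    refine measure_union_null hZ₀null (measure_iUnion_null hDnull)
  have hae : ∀ᵐ x ∂ν, x ∉ Zbad := by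
    rw [MeasureTheory.ae_iff]
    simpa using hZbadnull
  refine hae.mono (fun x hx => ?_)
  obtain ⟨p, rfl⟩ := Quotient.exists_rep x
  set x := Quotient.mk (upSetoid X ω) p with hxdef
  have hxZ₀ : x ∉ Z₀ := fun hc => hx (Or.inl hc)
  have hxDn : ∀ n, x ∉ internalSet X ω (D n) :=
    fun n hc => hx (Or.inr (Set.mem_iUnion.2 ⟨n, hc⟩))
  -- for every n, eventually `|g i (p i) - f x| ≤ 5 * w n`
  have hkey : ∀ n, ∀ᶠ i in (ω : Filter ℕ), |g i (p i) - f x| ≤ 5 * w n := by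
    intro n
    have E1 := hlevel n p hxZ₀
    have E2 : ∀ᶠ i in (ω : Filter ℕ), n ≤ i := nat_tail_mem hω n
    have E3 : ∀ᶠ i in (ω : Filter ℕ), ∀ l, l < n → p i ∉ D l i := by
      have hsub : (⋂ l ∈ Finset.range n, {i : ℕ | p i ∉ D l i}) ∈ ω := by
        refine (Filter.biInter_finset_mem _).2 (fun l _ => ?_)
        exact Ultrafilter.compl_mem_iff_notMem.2 (hxDn l)
      refine Filter.mem_of_superset hsub ?_
      intro i hi
      simp only [Set.mem_iInter, Set.mem_setOf_eq] at hi
      exact fun l hl => hi l (Finset.mem_range.2 hl)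
    refine ((E1.and E2).and E3).mono ?_
    rintro i ⟨⟨hi1, hi2⟩, hi3⟩
    set M := Nat.findGreatest (fun m => ∀ l, l < m → p i ∉ D l i) i with hM
    have hMn : n ≤ M := Nat.le_findGreatest hi2 hi3
    have hMspec : ∀ l, l < M → p i ∉ D l i := by
      have hsp := Nat.findGreatest_spec (P := fun m => ∀ l, l < m → p i ∉ D l i)
        (Nat.zero_le i) (fun l hl => absurd hl (Nat.not_lt_zero l))
      exact hsp
    -- telescoping estimate
    have htel : ∀ M', n ≤ M' → (∀ l, n ≤ l → l < M' → p i ∉ D l i) →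
        |h M' i (p i) - h n i (p i)| ≤ 4 * w n - 4 * w M' := by
      intro M' hM' hDl
      induction M', hM' using Nat.le_induction with
      | base => simp
      | succ M' hM' ih =>
        have hprev : |h M' i (p i) - h n i (p i)| ≤ 4 * w n - 4 * w M' :=
          ih (fun l hl1 hl2 => hDl l hl1 (Nat.lt_succ_of_lt hl2))
        have hstep : |h (M' + 1) i (p i) - h M' i (p i)| ≤ 2 * w M' := by
          have hnotin := hDl M' hM' (Nat.lt_succ_self M')
          rw [hD] at hnotin
          simp only [Finset.mem_filter, Finset.mem_univ, true_and, not_lt] at hnotin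
          exact hnotin
        have habs : |h (M' + 1) i (p i) - h n i (p i)| ≤
            |h (M' + 1) i (p i) - h M' i (p i)| + |h M' i (p i) - h n i (p i)| :=
          abs_sub_le _ _ _
        have hw' := hwsucc M'
        calc |h (M' + 1) i (p i) - h n i (p i)|
            ≤ 2 * w M' + (4 * w n - 4 * w M') := by linarith
          _ = 4 * w n - 4 * w (M' + 1) := by rw [hw']; ring
    have hfinal : |h M i (p i) - h n i (p i)| ≤ 4 * w n := by
      have := htel M hMn (fun l _ hl2 => hMspec l hl2)
      have hwM := (hw0 M).le
      linarith
    have hgi : g i (p i) = h M i (p i) := rfl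
    rw [hgi]
    calc |h M i (p i) - f x| ≤ |h M i (p i) - h n i (p i)| + |h n i (p i) - f x| :=
        abs_sub_le _ _ _
      _ ≤ 4 * w n + w n := add_le_add hfinal hi1
      _ = 5 * w n := by ring
  -- conclude `uprodFun g x = f x`
  have hL : uprodFun X ω g x = ulim ω (fun i => g i (p i)) := rfl
  have htend : Tendsto (fun i => g i (p i)) (ω : Filter ℕ)
      (𝓝 (ulim ω (fun i => g i (p i)))) :=
    tendsto_ulim (fun i => hgbd i (p i))
  have habs : Tendsto (fun i => |g i (p i) - f x|) (ω : Filter ℕ)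
      (𝓝 (|ulim ω (fun i => g i (p i)) - f x|)) :=
    (htend.sub tendsto_const_nhds).abs
  have hbound : ∀ n, |ulim ω (fun i => g i (p i)) - f x| ≤ 5 * w n :=
    fun n => le_of_tendsto habs (hkey n)
  have hzero : |ulim ω (fun i => g i (p i)) - f x| ≤ 0 := by
    by_contra hcon
    push_neg at hcon
    obtain ⟨n, hn⟩ := pow_unbounded_of_one_lt (5 * d / |ulim ω (fun i => g i (p i)) - f x|)
      (one_lt_two (α := ℝ))
    have h5 : 5 * w n < |ulim ω (fun i => g i (p i)) - f x| := by
      have h2n : (0:ℝ) < 2 ^ n := by positivity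
      rw [div_lt_iff₀ hcon] at hn
      show 5 * (d / 2 ^ n) < _
      rw [show 5 * (d / 2 ^ n) = 5 * d / 2 ^ n by ring, div_lt_iff₀ h2n]
      nlinarith [hn]
    exact absurd (hbound n) (not_le.2 h5)
  rw [hL]
  have := abs_nonneg (ulim ω (fun i => g i (p i)) - f x)
  have heq : |ulim ω (fun i => g i (p i)) - f x| = 0 := le_antisymm hzero this
  rw [abs_eq_zero, sub_eq_zero] at heq
  exact heq
end

section
/- Let Y ⊆ [0,1]^n be a Lebesgue measurable set that is independent from the σ-algebra A_{n-1} generated by the projection onto the first n-1 coordinates. Then there exist measurable sets X_k of the form X_k = ⋃_{j=1}^{n_k} (A_j^k × B_j^k), where A_1^k, …, A_{n_k}^k is a measurable partition of [0,1]^{n-1} and all B_j^k ⊆ [0,1] have Lebesgue measure equal to Vol(X_k), such that Vol(X_k △ Y) → 0 as k → ∞. -/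
open MeasureTheory Set
open scoped ENNReal symmDiff

lemma abssub_le_measure_symmDiff {α : Type*} [MeasurableSpace α] (ν : Measure α)
    (a b : Set α) : (ν a - ν b) + (ν b - ν a) ≤ ν (symmDiff a b) := by
  have h1 : ν a ≤ ν b + ν (symmDiff a b) := by
    calc ν a ≤ ν (b ∪ (a \ b)) := measure_mono (fun x hx => by
          by_cases hb : x ∈ b
          · exact Or.inl hb
          · exact Or.inr ⟨hx, hb⟩)
      _ ≤ ν b + ν (a \ b) := measure_union_le _ _
      _ ≤ ν b + ν (symmDiff a b) := add_le_add_right (measure_mono subset_union_left) _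
  have h2 : ν b ≤ ν a + ν (symmDiff a b) := by
    calc ν b ≤ ν (a ∪ (b \ a)) := measure_mono (fun x hx => by
          by_cases hb : x ∈ a
          · exact Or.inl hb
          · exact Or.inr ⟨hx, hb⟩)
      _ ≤ ν a + ν (b \ a) := measure_union_le _ _
      _ ≤ ν a + ν (symmDiff a b) := add_le_add_right (measure_mono subset_union_right) _
  rcases le_total (ν a) (ν b) with h | h
  · rw [tsub_eq_zero_of_le h, zero_add]
    exact tsub_le_iff_left.mpr h2
  · rw [tsub_eq_zero_of_le h, add_zero]
    exact tsub_le_iff_left.mpr h1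

lemma exists_subset_volume_eq (C : Set ℝ) (hC : MeasurableSet C) (hCb : C ⊆ Icc (0:ℝ) 1)
    (r : ℝ≥0∞) (hr : r ≤ volume C) :
    ∃ D : Set ℝ, D ⊆ C ∧ MeasurableSet D ∧ volume D = r := by
  have hCfin : volume C ≠ ∞ := by
    refine ne_top_of_le_ne_top ?_ (measure_mono hCb)
    simp [Real.volume_Icc]
  have hrfin : r ≠ ∞ := ne_top_of_le_ne_top hCfin hr
  set f : ℝ → ℝ := fun s => (volume (C ∩ Icc 0 s)).toReal with hf
  have hfin : ∀ s, volume (C ∩ Icc 0 s) ≠ ∞ :=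
    fun s => ne_top_of_le_ne_top hCfin (measure_mono inter_subset_left)
  have hmono : Monotone f := by
    intro s t hst
    exact ENNReal.toReal_mono (hfin t) (measure_mono (inter_subset_inter_right _ (Icc_subset_Icc_right hst)))
  have hlip : LipschitzWith 1 f := by
    apply LipschitzWith.of_dist_le_mul
    intro s t
    wlog hst : t ≤ s generalizing s t
    · rw [dist_comm, dist_comm s t]; exact this t s (le_of_not_ge hst)
    rw [NNReal.coe_one, one_mul, Real.dist_eq, Real.dist_eq, abs_of_nonneg (sub_nonneg.mpr (hmono hst)),
      abs_of_nonneg (sub_nonneg.mpr hst)]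
    have hsub : C ∩ Icc 0 s ⊆ (C ∩ Icc 0 t) ∪ Ioc t s := by
      rintro x ⟨hxC, hx0, hxs⟩
      by_cases h : x ≤ t
      · exact Or.inl ⟨hxC, hx0, h⟩
      · exact Or.inr ⟨lt_of_not_ge h, hxs⟩
    have : volume (C ∩ Icc 0 s) ≤ volume (C ∩ Icc 0 t) + ENNReal.ofReal (s - t) := by
      calc volume (C ∩ Icc 0 s) ≤ volume ((C ∩ Icc 0 t) ∪ Ioc t s) := measure_mono hsub
        _ ≤ volume (C ∩ Icc 0 t) + volume (Ioc t s) := measure_union_le _ _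
        _ = volume (C ∩ Icc 0 t) + ENNReal.ofReal (s - t) := by rw [Real.volume_Ioc]
    have := ENNReal.toReal_mono (by simp [hfin t]) this
    rw [ENNReal.toReal_add (hfin t) (by simp), ENNReal.toReal_ofReal (sub_nonneg.mpr hst)] at this
    linarith
  have hf0 : f 0 = 0 := by
    have : volume (C ∩ Icc (0:ℝ) 0) = 0 := by
      refine measure_mono_null (inter_subset_right) ?_
      simp [Real.volume_Icc]
    simp only [hf]
    rw [show Icc (0:ℝ) 0 = {0} by simp] at this
    simp [this]
  have hf1 : f 1 = (volume C).toReal := by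
    have : C ∩ Icc (0:ℝ) 1 = C := inter_eq_self_of_subset_left hCb
    simp [hf, this]
  have hmem : r.toReal ∈ Icc (f 0) (f 1) := by
    rw [hf0, hf1]
    exact ⟨ENNReal.toReal_nonneg, ENNReal.toReal_mono hCfin hr⟩
  obtain ⟨s, _, hs⟩ := intermediate_value_Icc (by norm_num : (0:ℝ) ≤ 1)
    (hlip.continuous.continuousOn) hmem
  refine ⟨C ∩ Icc 0 s, inter_subset_left, hC.inter measurableSet_Icc, ?_⟩
  have : (volume (C ∩ Icc 0 s)).toReal = r.toReal := hs
  rw [← ENNReal.ofReal_toReal (hfin s), this, ENNReal.ofReal_toReal hrfin]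

lemma exists_adjust (C : Set ℝ) (hC : MeasurableSet C) (hCb : C ⊆ Icc (0:ℝ) 1)
    (c : ℝ≥0∞) (hc : c ≤ 1) :
    ∃ B : Set ℝ, B ⊆ Icc (0:ℝ) 1 ∧ MeasurableSet B ∧ volume B = c ∧
      volume (symmDiff B C) = (volume C - c) + (c - volume C) := by
  have hIcc : volume (Icc (0:ℝ) 1) = 1 := by simp [Real.volume_Icc]
  have hCfin : volume C ≠ ∞ := by
    refine ne_top_of_le_ne_top ?_ (measure_mono hCb); simp [hIcc]
  rcases le_total c (volume C) with h | h
  · obtain ⟨D, hDC, hDm, hDvol⟩ := exists_subset_volume_eq C hC hCb c h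
    refine ⟨D, hDC.trans hCb, hDm, hDvol, ?_⟩
    have h1 : symmDiff D C = C \ D := by
      rw [symmDiff_def]
      simp [Set.diff_eq_empty.mpr hDC]
    rw [h1, measure_diff hDC hDm.nullMeasurableSet (by rw [hDvol]; exact ne_top_of_le_ne_top (by simp) hc),
      hDvol, tsub_eq_zero_of_le h, add_zero]
  · have hcompl : c - volume C ≤ volume (Icc (0:ℝ) 1 \ C) := by
      rw [measure_diff hCb hC.nullMeasurableSet hCfin, hIcc]
      exact tsub_le_tsub hc le_rfl
    obtain ⟨D, hDsub, hDm, hDvol⟩ := exists_subset_volume_eq (Icc (0:ℝ) 1 \ C)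
      (measurableSet_Icc.diff hC) diff_subset _ hcompl
    have hdisj : Disjoint C D := Set.disjoint_left.mpr (fun x hx hxD => (hDsub hxD).2 hx)
    refine ⟨C ∪ D, union_subset hCb (hDsub.trans diff_subset), hC.union hDm, ?_, ?_⟩
    · rw [measure_union hdisj.symm.symm hDm, hDvol, add_tsub_cancel_of_le h]
    · have h1 : symmDiff (C ∪ D) C = D := by
        rw [symmDiff_def]
        have : (C ∪ D) \ C = D := by
          rw [union_diff_left]
          ext x; exact ⟨fun h => h.1, fun h => ⟨h, fun hxC => (hDsub h).2 hxC⟩⟩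
        simp [this, Set.diff_eq_empty.mpr subset_union_left]
      rw [h1, hDvol, tsub_eq_zero_of_le h, zero_add]

lemma exists_rect_approx (m : ℕ) (Y : Set ((Fin m → ℝ) × ℝ)) (hY : MeasurableSet Y)
    (hvol : volume Y ≠ ∞) (δ : ℝ≥0∞) (hδ : 0 < δ) (hδt : δ ≠ ∞) :
    ∃ (K : ℕ) (P : Fin K → Set (Fin m → ℝ)) (Q : Fin K → Set ℝ),
      (∀ i, MeasurableSet (P i)) ∧ (∀ i, MeasurableSet (Q i)) ∧
      volume (symmDiff (⋃ i, P i ×ˢ Q i) Y) < 2 * δ := by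
  obtain ⟨U, hYU, hUo, hUlt⟩ := Set.exists_isOpen_lt_of_lt Y (volume Y + δ)
    (ENNReal.lt_add_right hvol hδ.ne')
  have hsum : volume Y + δ ≠ ∞ := ENNReal.add_ne_top.mpr ⟨hvol, hδt⟩
  have hUfin : volume U ≠ ∞ := (hUlt.trans hsum.lt_top).ne
  have hUY : volume (U \ Y) < δ := by
    rw [measure_diff hYU hY.nullMeasurableSet hvol]
    rw [ENNReal.sub_lt_iff_lt_right hvol (measure_mono hYU)]
    · rwa [add_comm]
  -- decompose U into countably many open rectangles
  have hbasis := (TopologicalSpace.isTopologicalBasis_opens (α := Fin m → ℝ)).prod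
    (TopologicalSpace.isTopologicalBasis_opens (α := ℝ))
  obtain ⟨S, hSsub, hSU⟩ := hbasis.open_eq_sUnion hUo
  have hSopen : ∀ s ∈ S, IsOpen s := by
    intro s hs
    obtain ⟨V, hV, W, hW, rfl⟩ := hSsub hs
    simp only [mem_setOf_eq] at hV hW
    exact hV.prod hW
  obtain ⟨T, hTc, hTS, hTU⟩ := TopologicalSpace.isOpen_sUnion_countable S hSopen
  obtain ⟨f, hf⟩ := (hTc.insert (∅ : Set ((Fin m → ℝ) × ℝ))).exists_eq_range
    (insert_nonempty _ _)
  have hUeq : U = ⋃ n, f n := by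
    rw [hSU, ← hTU, ← Set.sUnion_range, ← hf, Set.sUnion_insert, Set.empty_union]
  have hrect : ∀ n : ℕ, ∃ V W, IsOpen V ∧ IsOpen W ∧ f n = V ×ˢ W := by
    intro n
    have : f n ∈ insert (∅ : Set ((Fin m → ℝ) × ℝ)) T := by rw [hf]; exact mem_range_self n
    rcases this with h | h
    · exact ⟨∅, ∅, isOpen_empty, isOpen_empty, by simp [h]⟩
    · obtain ⟨V, hV, W, hW, hVW⟩ := hSsub (hTS h)
      exact ⟨V, W, hV, hW, hVW.symm⟩
  choose V W hVo hWo hVW using hrect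
  have hfm : ∀ n, MeasurableSet (f n) := fun n => by
    rw [hVW]; exact ((hVo n).measurableSet.prod (hWo n).measurableSet)
  have hfU : ∀ n, f n ⊆ U := fun n => hUeq ▸ subset_iUnion f n
  by_cases hsmall : volume U < δ
  · refine ⟨0, Fin.elim0, Fin.elim0, (fun i => i.elim0), (fun i => i.elim0), ?_⟩
    have h0 : (⋃ i : Fin 0, Fin.elim0 i ×ˢ Fin.elim0 i : Set ((Fin m → ℝ) × ℝ)) = ∅ := by
      simp
    rw [h0]
    have : symmDiff (∅ : Set ((Fin m → ℝ) × ℝ)) Y = Y := by simp [symmDiff_def]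
    rw [this]
    calc volume Y ≤ volume U := measure_mono hYU
      _ < δ := hsmall
      _ ≤ 2 * δ := by rw [two_mul]; exact le_add_self
  · push_neg at hsmall
    have hU0 : volume U ≠ 0 := fun h => (hδ.trans_le hsmall).ne' h
    have htend := tendsto_measure_iUnion_accumulate (μ := (volume : Measure ((Fin m → ℝ) × ℝ))) (f := f)
    rw [← hUeq] at htend
    have hlt : volume U - δ < volume U := ENNReal.sub_lt_self hUfin hU0 hδ.ne'
    obtain ⟨K, hK⟩ := (htend.eventually_const_lt hlt).exists
    set X : Set ((Fin m → ℝ) × ℝ) := accumulate f K with hX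
    have hXm : MeasurableSet X := by
      rw [hX, accumulate_def]
      exact MeasurableSet.biUnion (Set.to_countable _) (fun n _ => hfm n)
    have hXU : X ⊆ U := by
      rw [hX, accumulate_def]
      exact Set.iUnion₂_subset fun n _ => hfU n
    have hXfin : volume X ≠ ∞ := (lt_of_le_of_lt (measure_mono hXU) hUfin.lt_top).ne
    have hUX : volume (U \ X) < δ := by
      rw [measure_diff hXU hXm.nullMeasurableSet hXfin]
      rw [ENNReal.sub_lt_iff_lt_right hXfin (measure_mono hXU)]
      calc volume U = (volume U - δ) + δ := (tsub_add_cancel_of_le hsmall).symm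
        _ < volume X + δ := by exact ENNReal.add_lt_add_right hδt hK
        _ = δ + volume X := add_comm _ _
    refine ⟨K + 1, fun i => V i.val, fun i => W i.val,
      (fun i => (hVo i.val).measurableSet), (fun i => (hWo i.val).measurableSet), ?_⟩
    have hXeq : (⋃ i : Fin (K + 1), V i.val ×ˢ W i.val) = X := by
      rw [hX, accumulate_def]
      ext z
      simp only [mem_iUnion, ← hVW]
      constructor
      · rintro ⟨i, hi⟩; exact ⟨i.val, Nat.lt_succ_iff.mp i.isLt, hi⟩
      · rintro ⟨n, hn, hz⟩; exact ⟨⟨n, Nat.lt_succ_of_le hn⟩, hz⟩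
    rw [hXeq]
    have hsub : symmDiff X Y ⊆ (U \ Y) ∪ (U \ X) := by
      rintro z (⟨hzX, hzY⟩ | ⟨hzY, hzX⟩)
      · exact Or.inl ⟨hXU hzX, hzY⟩
      · exact Or.inr ⟨hYU hzY, hzX⟩
    calc volume (symmDiff X Y) ≤ volume ((U \ Y) ∪ (U \ X)) := measure_mono hsub
      _ ≤ volume (U \ Y) + volume (U \ X) := measure_union_le _ _
      _ < δ + δ := ENNReal.add_lt_add hUY hUX
      _ = 2 * δ := (two_mul δ).symm

/-- The probability measure on `[0,1]^{n-1} × [0,1]` (with `m = n - 1`), realized as the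
product of Lebesgue measure restricted to the cube `[0,1]^{m}` and to `[0,1]`. -/
noncomputable def cubeMeasure (m : ℕ) : Measure ((Fin m → ℝ) × ℝ) :=
  ((volume : Measure (Fin m → ℝ)).restrict (Set.univ.pi fun _ => Icc (0:ℝ) 1)).prod
    ((volume : Measure ℝ).restrict (Icc (0:ℝ) 1))

/-- If `Y ⊆ [0,1]^n = [0,1]^{n-1} × [0,1]` is measurable and independent from the σ-algebra
generated by the first `n-1` coordinates (i.e. `Vol(Y ∩ (A × [0,1])) = Vol(Y)·Vol(A × [0,1])`
for all measurable `A`), then `Y` can be approximated arbitrarily well in measure by sets of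
the form `⋃_j A_j × B_j` where the `A_j` form a measurable partition of `[0,1]^{n-1}` and
each `B_j ⊆ [0,1]` has Lebesgue measure equal to the measure of the approximating set. -/
theorem approx_independent_by_blocks (m : ℕ) (Y : Set ((Fin m → ℝ) × ℝ))
    (hY : MeasurableSet Y)
    (hYc : Y ⊆ (Set.univ.pi fun _ => Icc (0:ℝ) 1) ×ˢ Icc (0:ℝ) 1)
    (hind : ∀ A : Set (Fin m → ℝ), MeasurableSet A →
      cubeMeasure m (Y ∩ A ×ˢ (univ : Set ℝ)) =
        cubeMeasure m Y * cubeMeasure m (A ×ˢ (univ : Set ℝ))) :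
    ∀ ε : ℝ, 0 < ε →
      ∃ (N : ℕ) (A : Fin N → Set (Fin m → ℝ)) (B : Fin N → Set ℝ),
        (∀ j, MeasurableSet (A j)) ∧ (∀ j, MeasurableSet (B j)) ∧
        Pairwise (fun i j => Disjoint (A i) (A j)) ∧
        (Set.univ.pi fun _ => Icc (0:ℝ) 1) ⊆ ⋃ j, A j ∧
        (∀ j, B j ⊆ Icc (0:ℝ) 1) ∧
        (∀ j, volume (B j) = cubeMeasure m (⋃ j', A j' ×ˢ B j')) ∧
        cubeMeasure m (symmDiff (⋃ j, A j ×ˢ B j) Y) < ENNReal.ofReal ε := by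
  classical
  intro ε hε
  set Cm : Set (Fin m → ℝ) := Set.univ.pi fun _ => Icc (0:ℝ) 1 with hCmdef
  set I01 : Set ℝ := Icc (0:ℝ) 1 with hI01def
  have hCmm : MeasurableSet Cm := MeasurableSet.univ_pi (fun _ => measurableSet_Icc)
  have hI01m : MeasurableSet I01 := measurableSet_Icc
  set μm : Measure (Fin m → ℝ) := volume.restrict Cm with hμmdef
  set ν1 : Measure ℝ := volume.restrict I01 with hν1def
  have hμdef : cubeMeasure m = μm.prod ν1 := rfl
  have hvI : volume I01 = 1 := by simp [hI01def, Real.volume_Icc]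
  have hvCm : volume Cm = 1 := by
    rw [hCmdef, volume_pi_pi]; simp [hvI]
  have hμm_univ : μm univ = 1 := by
    rw [hμmdef, Measure.restrict_apply_univ]; exact hvCm
  have hν1_univ : ν1 univ = 1 := by
    rw [hν1def, Measure.restrict_apply_univ]; exact hvI
  have hcube_vol : ∀ s : Set ((Fin m → ℝ) × ℝ), MeasurableSet s →
      cubeMeasure m s = volume (s ∩ (Cm ×ˢ I01)) := by
    intro s hs
    rw [hμdef, hμmdef, hν1def, Measure.prod_restrict, ← Measure.volume_eq_prod,
      Measure.restrict_apply hs]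
  set c := cubeMeasure m Y with hcdef
  have hμY : cubeMeasure m Y = volume Y := by
    rw [hcube_vol Y hY, inter_eq_self_of_subset_left hYc]
  have hc1 : c ≤ 1 := by
    rw [hcdef, hμdef]
    calc (μm.prod ν1) Y ≤ (μm.prod ν1) univ := measure_mono (subset_univ Y)
      _ = 1 := by
        rw [← Set.univ_prod_univ, Measure.prod_prod, hμm_univ, hν1_univ, one_mul]
  have hcfin : c ≠ ∞ := (hc1.trans_lt ENNReal.one_lt_top).ne
  -- Step A : a.e. constancy of fiber measures
  have hfibm : Measurable (fun x => ν1 (Prod.mk x ⁻¹' Y)) :=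
    measurable_measure_prodMk_left hY
  have hfib_ae : ∀ᵐ x ∂μm, ν1 (Prod.mk x ⁻¹' Y) = c := by
    refine ae_eq_of_forall_setLIntegral_eq_of_sigmaFinite hfibm measurable_const ?_
    intro A hA _
    have hpre : ∀ x, ν1 (Prod.mk x ⁻¹' (Y ∩ A ×ˢ (univ : Set ℝ)))
        = A.indicator (fun x => ν1 (Prod.mk x ⁻¹' Y)) x := by
      intro x
      by_cases hx : x ∈ A
      · rw [indicator_of_mem hx]
        congr 1
        ext y; simp [hx]
      · rw [indicator_of_notMem hx]
        have : Prod.mk x ⁻¹' (Y ∩ A ×ˢ (univ : Set ℝ)) = ∅ := by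
          ext y; simp [hx]
        rw [this, measure_empty]
    have h1 : cubeMeasure m (Y ∩ A ×ˢ (univ : Set ℝ))
        = ∫⁻ x in A, ν1 (Prod.mk x ⁻¹' Y) ∂μm := by
      rw [hμdef, Measure.prod_apply (hY.inter (hA.prod MeasurableSet.univ)),
        ← lintegral_indicator hA]
      exact lintegral_congr hpre
    have h2 : cubeMeasure m (A ×ˢ (univ : Set ℝ)) = μm A := by
      rw [hμdef, Measure.prod_prod, hν1_univ, mul_one]
    rw [← h1, hind A hA, h2, setLIntegral_const]
  -- Step B : approximate by rectangles
  set δ : ℝ≥0∞ := ENNReal.ofReal (ε / 8) with hδdef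
  have hδ0 : 0 < δ := ENNReal.ofReal_pos.mpr (by linarith)
  have hδfin : δ ≠ ∞ := ENNReal.ofReal_ne_top
  have hYfin : volume Y ≠ ∞ := by
    rw [← hμY]; exact hcfin
  obtain ⟨K, P, Q, hPm, hQm, happrox⟩ := exists_rect_approx m Y hY hYfin δ hδ0 hδfin
  -- Step C : atoms
  set A0 : Finset (Fin K) → Set (Fin m → ℝ) := fun S => {x | ∀ i, x ∈ P i ↔ i ∈ S}
    with hA0def
  have hA0m : ∀ S, MeasurableSet (A0 S) := by
    intro S
    have : A0 S = ⋂ i, (if i ∈ S then P i else (P i)ᶜ) := by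
      ext x
      simp only [hA0def, mem_setOf_eq, mem_iInter]
      refine forall_congr' fun i => ?_
      split_ifs with h <;> simp [h]
    rw [this]
    exact MeasurableSet.iInter fun i => by
      split_ifs with h
      exacts [hPm i, (hPm i).compl]
  set secS : (Fin m → ℝ) → Finset (Fin K) := fun x => Finset.univ.filter (fun i => x ∈ P i)
    with hsecSdef
  have hmemsec : ∀ x, x ∈ A0 (secS x) := by
    intro x i
    simp [hsecSdef, Finset.mem_filter]
  have huniq : ∀ x S, x ∈ A0 S → S = secS x := by
    intro x S hx
    ext i
    rw [hsecSdef, Finset.mem_filter]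
    exact ⟨fun hi => ⟨Finset.mem_univ i, (hx i).mpr hi⟩, fun ⟨_, hi⟩ => (hx i).mp hi⟩
  have hdisj : ∀ S T, S ≠ T → Disjoint (A0 S) (A0 T) := by
    intro S T hST
    rw [Set.disjoint_left]
    intro x hxS hxT
    exact hST ((huniq x S hxS).trans (huniq x T hxT).symm)
  have hcover : ∀ x, x ∈ ⋃ S, A0 S := fun x => mem_iUnion.mpr ⟨secS x, hmemsec x⟩
  set C0 : Finset (Fin K) → Set ℝ := fun S => ⋃ i ∈ S, Q i with hC0def
  have hC0m : ∀ S, MeasurableSet (C0 S) :=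
    fun S => MeasurableSet.biUnion S.countable_toSet (fun i _ => hQm i)
  set C1 : Finset (Fin K) → Set ℝ := fun S => C0 S ∩ I01 with hC1def
  have hC1m : ∀ S, MeasurableSet (C1 S) := fun S => (hC0m S).inter hI01m
  have hC1b : ∀ S, C1 S ⊆ I01 := fun S => inter_subset_right
  -- the rectangle identity
  have hX1 : (⋃ i, P i ×ˢ Q i) = ⋃ S, A0 S ×ˢ C0 S := by
    ext ⟨x, y⟩
    simp only [mem_iUnion, mem_prod, hC0def, mem_iUnion, exists_prop]
    constructor
    · rintro ⟨i, hxi, hyi⟩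
      refine ⟨secS x, hmemsec x, i, ?_, hyi⟩
      simp [hsecSdef, Finset.mem_filter, hxi]
    · rintro ⟨S, hxS, i, hiS, hyi⟩
      exact ⟨i, (hxS i).mpr hiS, hyi⟩
  set X2 : Set ((Fin m → ℝ) × ℝ) := ⋃ S, A0 S ×ˢ C1 S with hX2def
  have hX2m : MeasurableSet X2 :=
    MeasurableSet.iUnion fun S => (hA0m S).prod (hC1m S)
  have hsymm2 : cubeMeasure m (symmDiff X2 Y) < 2 * δ := by
    have hX1m : MeasurableSet (⋃ i, P i ×ˢ Q i) :=
      MeasurableSet.iUnion fun i => (hPm i).prod (hQm i)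
    have hcubeq : X2 ∩ (Cm ×ˢ I01) = (⋃ i, P i ×ˢ Q i) ∩ (Cm ×ˢ I01) := by
      rw [hX1]
      ext ⟨x, y⟩
      simp only [hX2def, hC1def, mem_inter_iff, mem_iUnion, mem_prod]
      constructor
      · rintro ⟨⟨S, hxS, hyS, _⟩, hc⟩; exact ⟨⟨S, hxS, hyS⟩, hc⟩
      · rintro ⟨⟨S, hxS, hyS⟩, hc⟩; exact ⟨⟨S, hxS, hyS, hc.2⟩, hc⟩
    calc cubeMeasure m (symmDiff X2 Y)
        = volume (symmDiff X2 Y ∩ (Cm ×ˢ I01)) := hcube_vol _ (hX2m.symmDiff hY)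
      _ = volume (symmDiff (⋃ i, P i ×ˢ Q i) Y ∩ (Cm ×ˢ I01)) := by
          have h1 : ∀ (a b : Set ((Fin m → ℝ) × ℝ)),
              symmDiff a b ∩ (Cm ×ˢ I01)
                = symmDiff (a ∩ (Cm ×ˢ I01)) (b ∩ (Cm ×ˢ I01)) := fun a b => by
            simpa [Set.inf_eq_inter] using
              (inf_symmDiff_distrib_right (a := a) (b := b) (c := Cm ×ˢ I01))
          rw [h1, h1, hcubeq]
      _ ≤ volume (symmDiff (⋃ i, P i ×ˢ Q i) Y) := measure_mono inter_subset_left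
      _ < 2 * δ := happrox
  -- Step D : adjust fibers
  set t : Finset (Fin K) → ℝ≥0∞ := fun S => volume (C1 S) with htdef
  have hadj := fun S => exists_adjust (C1 S) (hC1m S) (hC1b S) c hc1
  choose B hBsub hBm hBvol hBsymm using hadj
  set X3 : Set ((Fin m → ℝ) × ℝ) := ⋃ S, A0 S ×ˢ B S with hX3def
  have hX3m : MeasurableSet X3 :=
    MeasurableSet.iUnion fun S => (hA0m S).prod (hBm S)
  -- Step E : estimate symmDiff X3 X2
  have hE : cubeMeasure m (symmDiff X3 X2)
      ≤ ∑ S : Finset (Fin K), μm (A0 S) * ((t S - c) + (c - t S)) := by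
    have hmem3 : ∀ x y, ((x, y) ∈ X3 ↔ y ∈ B (secS x)) := by
      intro x y
      simp only [hX3def, mem_iUnion, mem_prod]
      constructor
      · rintro ⟨S, hxS, hyS⟩; rwa [huniq x S hxS] at hyS
      · intro hy; exact ⟨secS x, hmemsec x, hy⟩
    have hmem2 : ∀ x y, ((x, y) ∈ X2 ↔ y ∈ C1 (secS x)) := by
      intro x y
      simp only [hX2def, mem_iUnion, mem_prod]
      constructor
      · rintro ⟨S, hxS, hyS⟩; rwa [huniq x S hxS] at hyS
      · intro hy; exact ⟨secS x, hmemsec x, hy⟩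
    have hsub : symmDiff X3 X2 ⊆ ⋃ S, A0 S ×ˢ (symmDiff (B S) (C1 S)) := by
      rintro ⟨x, y⟩ hz
      refine mem_iUnion.mpr ⟨secS x, hmemsec x, ?_⟩
      rcases hz with ⟨h3, h2⟩ | ⟨h2, h3⟩
      · exact Or.inl ⟨(hmem3 x y).mp h3, fun hy => h2 ((hmem2 x y).mpr hy)⟩
      · exact Or.inr ⟨(hmem2 x y).mp h2, fun hy => h3 ((hmem3 x y).mpr hy)⟩
    calc cubeMeasure m (symmDiff X3 X2)
        ≤ cubeMeasure m (⋃ S, A0 S ×ˢ (symmDiff (B S) (C1 S))) := measure_mono hsub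
      _ ≤ ∑' S : Finset (Fin K), cubeMeasure m (A0 S ×ˢ (symmDiff (B S) (C1 S))) :=
          measure_iUnion_le _
      _ = ∑ S : Finset (Fin K), cubeMeasure m (A0 S ×ˢ (symmDiff (B S) (C1 S))) :=
          tsum_fintype _
      _ ≤ ∑ S : Finset (Fin K), μm (A0 S) * ((t S - c) + (c - t S)) := by
          refine Finset.sum_le_sum fun S _ => ?_
          rw [hμdef, Measure.prod_prod]
          refine mul_le_mul_right ?_ _
          calc ν1 (symmDiff (B S) (C1 S)) ≤ volume (symmDiff (B S) (C1 S)) :=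
                Measure.restrict_apply_le _ _
            _ = (t S - c) + (c - t S) := by rw [hBsymm S, htdef]
  -- Step F : the crux estimate
  have hF : ∑ S : Finset (Fin K), μm (A0 S) * ((t S - c) + (c - t S))
      ≤ cubeMeasure m (symmDiff X2 Y) := by
    have hptsum : ∀ x, ∑ S : Finset (Fin K),
        (A0 S).indicator (fun _ => (t S - c) + (c - t S)) x
        = (t (secS x) - c) + (c - t (secS x)) := by
      intro x
      rw [Finset.sum_eq_single (secS x)]
      · rw [indicator_of_mem (hmemsec x)]
      · intro S _ hS
        exact indicator_of_notMem (fun hx => hS (huniq x S hx)) _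
      · intro h; exact absurd (Finset.mem_univ _) h
    have hae : ∀ᵐ x ∂μm, ∑ S : Finset (Fin K),
        (A0 S).indicator (fun _ => (t S - c) + (c - t S)) x
        ≤ ν1 (Prod.mk x ⁻¹' symmDiff X2 Y) := by
      filter_upwards [hfib_ae] with x hx
      rw [hptsum x]
      have hpre2 : Prod.mk x ⁻¹' X2 = C1 (secS x) := by
        ext y
        simp only [hX2def, mem_preimage, mem_iUnion, mem_prod]
        constructor
        · rintro ⟨S, hxS, hyS⟩; rwa [huniq x S hxS] at hyS
        · intro hy; exact ⟨secS x, hmemsec x, hy⟩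
      have hpresym : Prod.mk x ⁻¹' (symmDiff X2 Y)
          = symmDiff (C1 (secS x)) (Prod.mk x ⁻¹' Y) := by
        rw [preimage_symmDiff, hpre2]
      rw [hpresym]
      have htS : ν1 (C1 (secS x)) = t (secS x) := by
        rw [hν1def, Measure.restrict_apply (hC1m _),
          inter_eq_self_of_subset_left (hC1b _), htdef]
      calc (t (secS x) - c) + (c - t (secS x))
          = (ν1 (C1 (secS x)) - ν1 (Prod.mk x ⁻¹' Y))
            + (ν1 (Prod.mk x ⁻¹' Y) - ν1 (C1 (secS x))) := by rw [htS, hx]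
        _ ≤ ν1 (symmDiff (C1 (secS x)) (Prod.mk x ⁻¹' Y)) :=
            abssub_le_measure_symmDiff _ _ _
    calc ∑ S : Finset (Fin K), μm (A0 S) * ((t S - c) + (c - t S))
        = ∑ S : Finset (Fin K), ∫⁻ x, (A0 S).indicator (fun _ => (t S - c) + (c - t S)) x ∂μm := by
          refine Finset.sum_congr rfl fun S _ => ?_
          rw [lintegral_indicator_const (hA0m S), mul_comm]
      _ = ∫⁻ x, ∑ S : Finset (Fin K),
            (A0 S).indicator (fun _ => (t S - c) + (c - t S)) x ∂μm :=
          (lintegral_finset_sum _ (fun S _ => (measurable_const.indicator (hA0m S)))).symm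
      _ ≤ ∫⁻ x, ν1 (Prod.mk x ⁻¹' symmDiff X2 Y) ∂μm := lintegral_mono_ae hae
      _ = cubeMeasure m (symmDiff X2 Y) := by
          rw [hμdef, Measure.prod_apply (hX2m.symmDiff hY)]
  -- Step G : total measure of X3
  have hsumA : ∑ S : Finset (Fin K), μm (A0 S) = 1 := by
    rw [← tsum_fintype (L := SummationFilter.unconditional _), ← measure_iUnion (fun S T hST => hdisj S T hST) hA0m]
    rw [eq_univ_of_forall hcover, hμm_univ]
  have hμX3 : cubeMeasure m X3 = c := by
    rw [hX3def, measure_iUnion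
      (fun S T hST => Set.disjoint_prod.mpr (Or.inl (hdisj S T hST)))
      (fun S => (hA0m S).prod (hBm S)), tsum_fintype]
    have heach : ∀ S, cubeMeasure m (A0 S ×ˢ B S) = μm (A0 S) * c := by
      intro S
      rw [hμdef, Measure.prod_prod, hν1def, Measure.restrict_apply (hBm S),
        inter_eq_self_of_subset_left (hBsub S), hBvol S]
    rw [Finset.sum_congr rfl (fun S _ => heach S), ← Finset.sum_mul, hsumA, one_mul]
  -- Step H : assemble the final estimate
  have htotal : cubeMeasure m (symmDiff X3 Y) < ENNReal.ofReal ε := by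
    have htri : symmDiff X3 Y ⊆ symmDiff X3 X2 ∪ symmDiff X2 Y :=
      symmDiff_triangle X3 X2 Y
    calc cubeMeasure m (symmDiff X3 Y)
        ≤ cubeMeasure m (symmDiff X3 X2 ∪ symmDiff X2 Y) := measure_mono htri
      _ ≤ cubeMeasure m (symmDiff X3 X2) + cubeMeasure m (symmDiff X2 Y) :=
          measure_union_le _ _
      _ ≤ cubeMeasure m (symmDiff X2 Y) + cubeMeasure m (symmDiff X2 Y) :=
          add_le_add (hE.trans hF) le_rfl
      _ < 2 * δ + 2 * δ := ENNReal.add_lt_add hsymm2 hsymm2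
      _ ≤ ENNReal.ofReal ε := by
          have h2δ : 2 * δ = ENNReal.ofReal (ε / 4) := by
            rw [hδdef, ← ENNReal.ofReal_ofNat 2,
              ← ENNReal.ofReal_mul (by norm_num : (0:ℝ) ≤ (2:ℝ))]
            congr 1
            ring
          rw [h2δ, ← ENNReal.ofReal_add (by linarith) (by linarith)]
          exact ENNReal.ofReal_le_ofReal (by linarith)
  -- reindex by Fin N
  set N := Fintype.card (Finset (Fin K)) with hN
  set e : Fin N ≃ Finset (Fin K) := (Fintype.equivFin (Finset (Fin K))).symm with he
  have hreA : (⋃ j, A0 (e j)) = ⋃ S, A0 S :=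
    iUnion_congr_of_surjective e e.surjective (fun _ => rfl)
  have hreAB : (⋃ j, A0 (e j) ×ˢ B (e j)) = X3 := by
    rw [hX3def]
    exact iUnion_congr_of_surjective e e.surjective (fun _ => rfl)
  refine ⟨N, fun j => A0 (e j), fun j => B (e j),
    fun j => hA0m _, fun j => hBm _, ?_, ?_, fun j => hBsub _, ?_, ?_⟩
  · intro i j hij
    exact hdisj _ _ (fun h => hij (e.injective h))
  · intro x _
    rw [hreA]; exact hcover x
  · intro j
    rw [hreAB, hμX3]
    exact hBvol (e j)
  · rw [hreAB]
    exact htotal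
end

section
/- Every separable atomless probability space (X,A,μ) admits a map f : X → [0,1] such that f^{-1}(Borel sets) ⊆ A, μ(f^{-1}(U)) = λ(U) for every Borel U ⊆ [0,1], and for every L ∈ A there exists a Borel set M ⊆ [0,1] with μ(L △ f^{-1}(M)) = 0. -/
open MeasureTheory Set

/-- A probability space is *separable* if its measure algebra is separable: there is a
countable family of measurable sets approximating every measurable set in the
metric `d(A,B) = μ(A △ B)`. -/
def SeparableMeasureAlgebra {X : Type} [m : MeasurableSpace X] (μ : Measure X) : Prop :=
  ∃ D : Set (Set X), D.Countable ∧ (∀ d ∈ D, MeasurableSet d) ∧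
    ∀ A : Set X, MeasurableSet A → ∀ ε : ℝ, 0 < ε →
      ∃ d ∈ D, μ (symmDiff A d) < ENNReal.ofReal ε

/-- A probability space is *atomless* if every set of positive measure has a measurable
subset of strictly smaller positive measure. -/
def AtomlessSpace {X : Type} [m : MeasurableSpace X] (μ : Measure X) : Prop :=
  ∀ A : Set X, MeasurableSet A → 0 < μ A →
    ∃ B : Set X, B ⊆ A ∧ MeasurableSet B ∧ 0 < μ B ∧ μ B < μ A

section CdfAux

open Filter ProbabilityTheory Topology

variable (ν : Measure ℝ) [IsProbabilityMeasure ν] [NullSingletonClass ν]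

lemma SAR.cdf_leftLim_eq (x : ℝ) : Function.leftLim (cdf ν) x = cdf ν x := by
  have h1 : (cdf ν).measure {x} = ENNReal.ofReal (cdf ν x - Function.leftLim (cdf ν) x) :=
    (cdf ν).measure_singleton x
  rw [measure_cdf, measure_singleton] at h1
  have h2 : cdf ν x - Function.leftLim (cdf ν) x ≤ 0 := ENNReal.ofReal_eq_zero.mp h1.symm
  have h3 := (monotone_cdf ν).leftLim_le (le_refl x)
  linarith

lemma SAR.cdf_cont : Continuous (cdf ν) := by
  rw [continuous_iff_continuousAt]
  intro x
  rw [(monotone_cdf ν).continuousAt_iff_leftLim_eq_rightLim]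
  rw [SAR.cdf_leftLim_eq, StieltjesFunction.rightLim_eq]

lemma SAR.cdf_fiber_le {t : ℝ} (ht : t < 1) : ν {x | cdf ν x ≤ t} ≤ ENNReal.ofReal t := by
  rcases eq_empty_or_nonempty {x | cdf ν x ≤ t} with h | hA
  · simp [h]
  · obtain ⟨b, hb⟩ := ((tendsto_cdf_atTop ν).eventually_const_lt ht).exists
    have hbdd : BddAbove {x | cdf ν x ≤ t} := by
      refine ⟨b, fun x hx => le_of_not_gt fun hlt => ?_⟩
      exact absurd ((monotone_cdf ν hlt.le).trans hx) (not_le.mpr hb)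
    set s := sSup {x | cdf ν x ≤ t} with hs
    have hst : cdf ν s ≤ t := by
      rw [← SAR.cdf_leftLim_eq ν s,
        (monotone_cdf ν).leftLim_eq_sSup (x := s)]
      refine csSup_le (nonempty_Iio.image _) ?_
      rintro y ⟨x, hx, rfl⟩
      obtain ⟨a, ha, hxa⟩ := exists_lt_of_lt_csSup hA hx
      exact (monotone_cdf ν hxa.le).trans ha
    calc ν {x | cdf ν x ≤ t} ≤ ν (Iic s) := measure_mono fun x hx => le_csSup hbdd hx
    _ = ENNReal.ofReal (cdf ν s) := (ofReal_cdf ν s).symm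
    _ ≤ ENNReal.ofReal t := ENNReal.ofReal_le_ofReal hst

lemma SAR.cdf_fiber_eq {t : ℝ} (h0 : 0 ≤ t) (ht : t < 1) :
    ν {x | cdf ν x ≤ t} = ENNReal.ofReal t := by
  refine le_antisymm (SAR.cdf_fiber_le ν ht) ?_
  rcases eq_or_lt_of_le h0 with rfl | h0'
  · simp
  · obtain ⟨a, ha⟩ := ((tendsto_cdf_atBot ν).eventually_lt_const h0').exists
    obtain ⟨b, hb⟩ := ((tendsto_cdf_atTop ν).eventually_const_lt ht).exists
    have hab : a ≤ b := by
      by_contra hba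
      push_neg at hba
      have := monotone_cdf ν hba.le
      linarith
    obtain ⟨x0, _, hx0⟩ := intermediate_value_Icc hab (SAR.cdf_cont ν).continuousOn ⟨ha.le, hb.le⟩
    calc ENNReal.ofReal t = ν (Iic x0) := by rw [← hx0, ofReal_cdf]
    _ ≤ ν {x | cdf ν x ≤ t} := measure_mono fun y hy => (monotone_cdf ν hy).trans_eq hx0

lemma SAR.cdf_fiber_eq_Iic (a : ℝ) : ν {x | cdf ν x ≤ cdf ν a} = ν (Iic a) := by
  rcases lt_or_ge (cdf ν a) 1 with h | h
  · rw [SAR.cdf_fiber_eq ν (cdf_nonneg ν a) h, ofReal_cdf]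
  · have h1 : cdf ν a = 1 := le_antisymm (cdf_le_one ν a) h
    have h2 : {x | cdf ν x ≤ cdf ν a} = univ :=
      eq_univ_of_forall fun x => by rw [h1]; exact cdf_le_one ν x
    rw [h2, measure_univ, ← ofReal_cdf, h1, ENNReal.ofReal_one]

lemma SAR.map_cdf_eq : Measure.map (fun t => cdf ν t) ν = volume.restrict (Icc (0:ℝ) 1) := by
  have hG : Measurable fun t => cdf ν t := (monotone_cdf ν).measurable
  haveI : IsFiniteMeasure (volume.restrict (Icc (0:ℝ) 1)) :=
    ⟨by rw [Measure.restrict_apply_univ, Real.volume_Icc]; norm_num⟩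
  haveI : IsProbabilityMeasure (Measure.map (fun t => cdf ν t) ν) :=
    Measure.isProbabilityMeasure_map hG.aemeasurable
  refine Measure.ext_of_Iic _ _ fun t => ?_
  rw [Measure.map_apply hG measurableSet_Iic, Measure.restrict_apply measurableSet_Iic]
  rcases lt_or_ge t 0 with h | h
  · have h1 : (fun x => cdf ν x) ⁻¹' Iic t = ∅ := by
      refine eq_empty_of_forall_notMem fun x hx => ?_
      have := cdf_nonneg ν x
      simp only [mem_preimage, mem_Iic] at hx
      linarith
    have h2 : Iic t ∩ Icc (0:ℝ) 1 = ∅ := by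
      refine eq_empty_of_forall_notMem fun x hx => ?_
      obtain ⟨hx1, hx2, _⟩ := hx
      simp only [mem_Iic] at hx1
      linarith
    rw [h1, h2]; simp
  · rcases lt_or_ge t 1 with h1 | h1
    · have e1 : (fun x => cdf ν x) ⁻¹' Iic t = {x | cdf ν x ≤ t} := rfl
      have e2 : Iic t ∩ Icc (0:ℝ) 1 = Icc 0 t := by
        ext x
        simp only [mem_inter_iff, mem_Iic, mem_Icc]
        constructor
        · rintro ⟨hx1, hx2, _⟩; exact ⟨hx2, hx1⟩
        · rintro ⟨hx1, hx2⟩; exact ⟨hx2, hx1, by linarith⟩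
      rw [e1, e2, SAR.cdf_fiber_eq ν h h1, Real.volume_Icc, sub_zero]
    · have e1 : (fun x => cdf ν x) ⁻¹' Iic t = univ :=
        eq_univ_of_forall fun x => by
          simp only [mem_preimage, mem_Iic]
          exact (cdf_le_one ν x).trans h1
      have e2 : Iic t ∩ Icc (0:ℝ) 1 = Icc 0 1 :=
        inter_eq_self_of_subset_right fun x hx => hx.2.trans h1
      rw [e1, e2, measure_univ, Real.volume_Icc]
      norm_num

lemma SAR.cdf_dense (S : Set ℝ) (hS : MeasurableSet S) :
    ∃ B : Set ℝ, MeasurableSet B ∧ ν (symmDiff S ((fun t => cdf ν t) ⁻¹' B)) = 0 := by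
  set G : ℝ → ℝ := fun t => cdf ν t with hGdef
  let P : Set ℝ → Prop := fun S =>
    MeasurableSet S ∧ ∃ B : Set ℝ, MeasurableSet B ∧ ν (symmDiff S (G ⁻¹' B)) = 0
  let m' : MeasurableSpace ℝ :=
    { MeasurableSet' := P
      measurableSet_empty := ⟨MeasurableSet.empty, ∅, MeasurableSet.empty, by simp⟩
      measurableSet_compl := by
        rintro s ⟨hs, B, hB, h0⟩
        refine ⟨hs.compl, Bᶜ, hB.compl, ?_⟩
        rw [preimage_compl]
        rw [compl_symmDiff_compl (a := s) (b := G ⁻¹' B)]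
        exact h0
      measurableSet_iUnion := by
        intro s hs
        choose B hB h0 using fun i => (hs i).2
        refine ⟨MeasurableSet.iUnion fun i => (hs i).1, ⋃ i, B i, MeasurableSet.iUnion hB, ?_⟩
        rw [preimage_iUnion]
        refine measure_mono_null ?_ (measure_iUnion_null h0)
        intro x hx
        rcases Set.mem_symmDiff.mp hx with ⟨hx1, hx2⟩ | ⟨hx1, hx2⟩
        · obtain ⟨i, hi⟩ := mem_iUnion.mp hx1
          exact mem_iUnion.mpr
            ⟨i, Set.mem_symmDiff.mpr (Or.inl ⟨hi, fun h => hx2 (mem_iUnion.mpr ⟨i, h⟩)⟩)⟩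
        · obtain ⟨i, hi⟩ := mem_iUnion.mp hx1
          exact mem_iUnion.mpr
            ⟨i, Set.mem_symmDiff.mpr (Or.inr ⟨hi, fun h => hx2 (mem_iUnion.mpr ⟨i, h⟩)⟩)⟩ }
  have hle : (Real.measurableSpace : MeasurableSpace ℝ) ≤ m' := by
    rw [Real.borelSpace.measurable_eq, borel_eq_generateFrom_Iic ℝ]
    refine MeasurableSpace.generateFrom_le ?_
    rintro s ⟨a, rfl⟩
    refine ⟨measurableSet_Iic, Iic (cdf ν a), measurableSet_Iic, ?_⟩
    have hsub : Iic a ⊆ G ⁻¹' Iic (cdf ν a) := fun x hx => monotone_cdf ν hx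
    rw [symmDiff_of_le hsub]
    have hpre : G ⁻¹' Iic (cdf ν a) = {x | cdf ν x ≤ cdf ν a} := rfl
    rw [measure_diff hsub measurableSet_Iic.nullMeasurableSet (measure_ne_top ν _), hpre,
      SAR.cdf_fiber_eq_Iic ν a, tsub_self]
  exact (hle S hS).2

end CdfAux

/-- Every separable atomless probability space `(X, 𝒜, μ)` admits a map `f : X → [0,1]`
such that `f⁻¹(Borel) ⊆ 𝒜`, `μ(f⁻¹(U)) = λ(U)` for every Borel `U ⊆ [0,1]`, and every
`L ∈ 𝒜` agrees, up to a null set, with `f⁻¹(M)` for some Borel `M ⊆ [0,1]`. -/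
theorem separable_atomless_realization {X : Type} [m : MeasurableSpace X] (μ : Measure X)
    [IsProbabilityMeasure μ] (hsep : SeparableMeasureAlgebra μ) (hatomless : AtomlessSpace μ) :
    ∃ f : X → ℝ, (∀ x, f x ∈ Icc (0:ℝ) 1) ∧
      (∀ U : Set ℝ, MeasurableSet U → MeasurableSet (f ⁻¹' U)) ∧
      (∀ U : Set ℝ, MeasurableSet U → U ⊆ Icc (0:ℝ) 1 → μ (f ⁻¹' U) = volume U) ∧
      (∀ L : Set X, MeasurableSet L →
        ∃ M : Set ℝ, MeasurableSet M ∧ M ⊆ Icc (0:ℝ) 1 ∧ μ (symmDiff L (f ⁻¹' M)) = 0) := by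
  classical
  open Filter ProbabilityTheory in
  obtain ⟨D, hDc, hDm, hDapprox⟩ := hsep
  obtain ⟨d₀, hd₀, -⟩ := hDapprox ∅ MeasurableSet.empty 1 one_pos
  obtain ⟨e, hDe⟩ := hDc.exists_eq_range ⟨d₀, hd₀⟩
  have heD : ∀ n, e n ∈ D := fun n => hDe ▸ mem_range_self n
  have hem : ∀ n, MeasurableSet (e n) := fun n => hDm _ (heD n)
  set g : X → ℕ → Bool := fun x n => decide (x ∈ e n) with hgdef
  have hg : Measurable g := by
    refine measurable_pi_lambda _ fun n => ?_
    refine measurable_to_countable' fun b => ?_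
    cases b
    · have : (fun x => g x n) ⁻¹' {false} = (e n)ᶜ := by ext x; simp [hgdef]
      rw [this]; exact (hem n).compl
    · have : (fun x => g x n) ⁻¹' {true} = e n := by ext x; simp [hgdef]
      rw [this]; exact hem n
  obtain ⟨h, hemb⟩ := exists_measurableEmbedding_real (ℕ → Bool)
  set F : X → ℝ := fun x => h (g x) with hFdef
  have hF : Measurable F := hemb.measurable.comp hg
  set ν : Measure ℝ := Measure.map F μ with hνdef
  haveI : IsProbabilityMeasure ν := Measure.isProbabilityMeasure_map hF.aemeasurable
  -- fibers of `g` are null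
  have hfiber : ∀ c : ℕ → Bool, μ (g ⁻¹' {c}) = 0 := by
    intro c
    have hAeq : g ⁻¹' {c} = ⋂ n, (if c n = true then e n else (e n)ᶜ) := by
      ext x
      simp only [mem_preimage, mem_singleton_iff, funext_iff, mem_iInter, hgdef]
      refine forall_congr' fun n => ?_
      by_cases hc : c n = true <;> simp [hc]
    have hAm : MeasurableSet (g ⁻¹' {c}) := by
      rw [hAeq]
      exact MeasurableSet.iInter fun n => by
        by_cases hc : c n = true <;> simp [hc, hem n, (hem n).compl]
    by_contra hne
    obtain ⟨B, hBsub, hBm, hB0, hBlt⟩ := hatomless _ hAm (pos_iff_ne_zero.mpr hne)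
    set A := g ⁻¹' {c} with hAdef
    have hBfin : μ B ≠ ⊤ := measure_ne_top μ _
    have hABpos : 0 < μ (A \ B) := by
      rw [measure_diff hBsub hBm.nullMeasurableSet hBfin]
      exact tsub_pos_of_lt hBlt
    set ε : ℝ := min (μ B).toReal ((μ (A \ B)).toReal) with hεdef
    have hεpos : 0 < ε :=
      lt_min (ENNReal.toReal_pos hB0.ne' hBfin)
        (ENNReal.toReal_pos hABpos.ne' (measure_ne_top μ _))
    obtain ⟨d, hdD, hdlt⟩ := hDapprox B hBm ε hεpos
    obtain ⟨n, rfl⟩ : ∃ n, e n = d := by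
      rw [hDe] at hdD; exact hdD
    by_cases hc : c n = true
    · have hAsub : A ⊆ e n := by
        intro x hx
        have hgx : g x = c := hx
        have : g x n = c n := by rw [hgx]
        simp only [hgdef, hc] at this
        exact of_decide_eq_true this
      have hsub2 : A \ B ⊆ symmDiff B (e n) := fun x hx =>
        Set.mem_symmDiff.mpr (Or.inr ⟨hAsub hx.1, hx.2⟩)
      have hge : ENNReal.ofReal ε ≤ μ (A \ B) :=
        calc ENNReal.ofReal ε ≤ ENNReal.ofReal (μ (A \ B)).toReal :=
              ENNReal.ofReal_le_ofReal (min_le_right _ _)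
        _ = μ (A \ B) := ENNReal.ofReal_toReal (measure_ne_top μ _)
      exact absurd ((measure_mono hsub2).trans_lt hdlt) (not_lt.mpr hge)
    · have hdisj : ∀ x ∈ A, x ∉ e n := by
        intro x hx hxe
        have hgx : g x = c := hx
        have : g x n = c n := by rw [hgx]
        simp [hgdef, hxe, hc] at this
      have hsub2 : B ⊆ symmDiff B (e n) := fun x hx =>
        Set.mem_symmDiff.mpr (Or.inl ⟨hx, hdisj x (hBsub hx)⟩)
      have hge : ENNReal.ofReal ε ≤ μ B :=
        calc ENNReal.ofReal ε ≤ ENNReal.ofReal (μ B).toReal :=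
              ENNReal.ofReal_le_ofReal (min_le_left _ _)
        _ = μ B := ENNReal.ofReal_toReal hBfin
      exact absurd ((measure_mono hsub2).trans_lt hdlt) (not_lt.mpr hge)
  -- ν has no atoms
  haveI : NullSingletonClass ν := by
    constructor
    intro t
    rw [hνdef, Measure.map_apply hF (measurableSet_singleton t)]
    rcases eq_empty_or_nonempty (h ⁻¹' {t}) with hh | ⟨c, hc⟩
    · rw [show F ⁻¹' {t} = g ⁻¹' (h ⁻¹' {t}) from rfl, hh]
      simp
    · have hsingle : h ⁻¹' {t} = {c} := by
        apply Subset.antisymm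
        · intro c' hc'
          exact hemb.injective
            (show h c' = h c by rw [show h c' = t from hc', show h c = t from hc])
        · intro c' hc'
          rw [mem_singleton_iff] at hc'
          subst hc'
          exact hc
      rw [show F ⁻¹' {t} = g ⁻¹' (h ⁻¹' {t}) from rfl, hsingle, hfiber c]
  -- the realization map
  set f : X → ℝ := fun x => cdf ν (F x) with hfdef
  have hGm : Measurable fun t => cdf ν t := (monotone_cdf ν).measurable
  have hf : Measurable f := hGm.comp hF
  have hmap : Measure.map f μ = volume.restrict (Icc (0:ℝ) 1) := by
    rw [show f = (fun t => cdf ν t) ∘ F from rfl, ← Measure.map_map hGm hF, ← hνdef,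
      SAR.map_cdf_eq ν]
  refine ⟨f, fun x => ⟨cdf_nonneg ν (F x), cdf_le_one ν (F x)⟩, fun U hU => hf hU, ?_, ?_⟩
  · intro U hU hUsub
    rw [← Measure.map_apply hf hU, hmap, Measure.restrict_apply hU,
      inter_eq_self_of_subset_left hUsub]
  · intro L hL
    choose dd hdd hdd2 using fun k : ℕ => hDapprox L hL ((1/2 : ℝ) ^ k) (by positivity)
    have hddr : ∀ k, ∃ n, e n = dd k := fun k => by
      have := hdd k; rw [hDe] at this; exact this
    choose nk hnk using hddr
    set C : ℕ → Set (ℕ → Bool) := fun j => {c | c j = true} with hCdef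
    have hCm : ∀ j, MeasurableSet (C j) := by
      intro j
      have : C j = (fun c : ℕ → Bool => c j) ⁻¹' {true} := rfl
      rw [this]
      exact (measurable_pi_apply j) (measurableSet_singleton true)
    have hecyl : ∀ j, e j = g ⁻¹' (C j) := by
      intro j
      ext x
      simp [hgdef, hCdef]
    have hTm : ∀ j, MeasurableSet (h '' C j) := fun j => hemb.measurableSet_image.mpr (hCm j)
    have hTpre : ∀ j, h ⁻¹' (h '' C j) = C j := fun j => preimage_image_eq _ hemb.injective
    choose B hBm hB0 using fun k => SAR.cdf_dense ν (h '' C (nk k)) (hTm (nk k))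
    -- pull the null symmetric differences back to X
    have hpull : ∀ k, μ (symmDiff (e (nk k)) (f ⁻¹' (B k))) = 0 := by
      intro k
      have h1 : e (nk k) = F ⁻¹' (h '' C (nk k)) := by
        rw [hecyl, show F ⁻¹' (h '' C (nk k)) = g ⁻¹' (h ⁻¹' (h '' C (nk k))) from rfl,
          hTpre]
      have h2 : f ⁻¹' (B k) = F ⁻¹' ((fun t => cdf ν t) ⁻¹' (B k)) := rfl
      rw [h1, h2, ← preimage_symmDiff,
        ← Measure.map_apply hF ((hTm (nk k)).symmDiff (hGm (hBm k))), ← hνdef]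
      exact hB0 k
    -- Borel–Cantelli
    set s : ℕ → Set X := fun k => symmDiff L (e (nk k)) with hsdef
    have hsle : ∀ k, μ (s k) ≤ ENNReal.ofReal ((1/2 : ℝ) ^ k) := by
      intro k
      have := hdd2 k
      rw [← hnk k] at this
      exact this.le
    have hsum : ∑' k, μ (s k) ≠ ⊤ := by
      refine ne_of_lt (lt_of_le_of_lt (ENNReal.tsum_le_tsum hsle) ?_)
      rw [← ENNReal.ofReal_tsum_of_nonneg (fun k => by positivity)
        (summable_geometric_of_lt_one (by norm_num) (by norm_num))]
      exact ENNReal.ofReal_lt_top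
    have hBC : μ (Filter.limsup s Filter.atTop) = 0 := measure_limsup_atTop_eq_zero hsum
    set A' : Set X := ⋂ n, ⋃ k, ⋃ _ : n ≤ k, e (nk k) with hA'def
    set M0 : Set ℝ := ⋂ n, ⋃ k, ⋃ _ : n ≤ k, B k with hM0def
    have hM0m : MeasurableSet M0 :=
      MeasurableSet.iInter fun n => MeasurableSet.iUnion fun k =>
        MeasurableSet.iUnion fun _ => hBm k
    refine ⟨M0 ∩ Icc 0 1, hM0m.inter measurableSet_Icc, inter_subset_right, ?_⟩
    have hfpre : f ⁻¹' (M0 ∩ Icc 0 1) = ⋂ n, ⋃ k, ⋃ _ : n ≤ k, f ⁻¹' (B k) := by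
      rw [preimage_inter]
      have hicc : f ⁻¹' Icc 0 1 = univ :=
        eq_univ_of_forall fun x => ⟨cdf_nonneg ν (F x), cdf_le_one ν (F x)⟩
      rw [hicc, inter_univ, hM0def]
      simp only [preimage_iInter, preimage_iUnion]
    have h1 : μ (symmDiff L A') = 0 := by
      refine measure_mono_null ?_ hBC
      intro x hx
      rw [Filter.mem_limsup_iff_frequently_mem, Filter.frequently_atTop]
      intro n
      rcases Set.mem_symmDiff.mp hx with ⟨hxL, hxA⟩ | ⟨hxA, hxL⟩
      · simp only [hA'def, mem_iInter, mem_iUnion, not_forall, not_exists] at hxA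
        obtain ⟨n0, hn0⟩ := hxA
        refine ⟨max n n0, le_max_left _ _, ?_⟩
        exact Set.mem_symmDiff.mpr (Or.inl ⟨hxL, hn0 (max n n0) (le_max_right _ _)⟩)
      · simp only [hA'def, mem_iInter, mem_iUnion] at hxA
        obtain ⟨k, hk, hxk⟩ := hxA n
        exact ⟨k, hk, Set.mem_symmDiff.mpr (Or.inr ⟨hxk, hxL⟩)⟩
    have h2 : μ (symmDiff A' (f ⁻¹' (M0 ∩ Icc 0 1))) = 0 := by
      rw [hfpre]
      refine measure_mono_null ?_ (measure_iUnion_null hpull)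
      intro x hx
      rw [mem_iUnion]
      rcases Set.mem_symmDiff.mp hx with ⟨hx1, hx2⟩ | ⟨hx1, hx2⟩
      · simp only [hA'def, mem_iInter, mem_iUnion] at hx1
        simp only [mem_iInter, mem_iUnion, not_forall, not_exists] at hx2
        obtain ⟨n0, hn0⟩ := hx2
        obtain ⟨k, hk, hxk⟩ := hx1 n0
        exact ⟨k, Set.mem_symmDiff.mpr (Or.inl ⟨hxk, hn0 k hk⟩)⟩
      · simp only [mem_iInter, mem_iUnion] at hx1
        simp only [hA'def, mem_iInter, mem_iUnion, not_forall, not_exists] at hx2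
        obtain ⟨n0, hn0⟩ := hx2
        obtain ⟨k, hk, hxk⟩ := hx1 n0
        exact ⟨k, Set.mem_symmDiff.mpr (Or.inr ⟨hxk, hn0 k hk⟩)⟩
    refine measure_mono_null ?_ (measure_union_null h1 h2)
    exact symmDiff_triangle L A' (f ⁻¹' (M0 ∩ Icc 0 1))
end
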